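/- arXiv:1402.5646 — 9 statements merged into one kernel-verified Lean document; each statement's English description precedes it below -/
import Mathlib

section
/- Let X be a finite set and F ⊆ P(X) a saturated k-Sperner system. If H₁ and H₂ are both homogeneous sets for F, then H₁ = H₂. -/
open Finset

variable {α : Type*} [DecidableEq α]

/-- `HasChain 𝒜 m` : the family `𝒜` contains a chain of `m` sets under strict inclusion. -/
def HasChain (𝒜 : Finset (Finset α)) (m : ℕ) : Prop :=
  ∃ C : Fin m → Finset α, StrictMono C ∧ ∀ i, C i ∈ 𝒜

/-- `IsSatSperner X 𝒜 k` : `𝒜 ⊆ 𝒫(X)` is a saturated `k`-Sperner system. -/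
def IsSatSperner (X : Finset α) (𝒜 : Finset (Finset α)) (k : ℕ) : Prop :=
  (∀ A ∈ 𝒜, A ⊆ X) ∧ ¬ HasChain 𝒜 (k + 1) ∧
    ∀ S ⊆ X, S ∉ 𝒜 → HasChain (insert S 𝒜) (k + 1)

/-- `A` meets every member of `𝒜` in `∅` or all of `A`. -/
def AtomProp (𝒜 : Finset (Finset α)) (A : Finset α) : Prop :=
  ∀ S ∈ 𝒜, S ∩ A = ∅ ∨ A ⊆ S

/-- `H` is homogeneous for `𝒜` within ground set `X`. -/
def IsHomog (X : Finset α) (𝒜 : Finset (Finset α)) (H : Finset α) : Prop :=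
  H ⊆ X ∧ 2 ≤ H.card ∧ AtomProp 𝒜 H ∧
    ∀ H' : Finset α, H' ⊆ X → H ⊆ H' → AtomProp 𝒜 H' → H' = H

/-- `𝒜 ⊆ 𝒫(X)` is a saturated antichain. -/
def IsSatAntichain (X : Finset α) (𝒜 : Finset (Finset α)) : Prop :=
  (∀ A ∈ 𝒜, A ⊆ X) ∧ (∀ A ∈ 𝒜, ∀ B ∈ 𝒜, ¬ A ⊂ B) ∧
    ∀ S ⊆ X, S ∉ 𝒜 → ∃ A ∈ 𝒜, A ⊂ S ∨ S ⊂ A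

/-- The number of chains of `m` sets in `𝒜`. -/
noncomputable def chainCount (𝒜 : Finset (Finset α)) (m : ℕ) : ℕ :=
  Nat.card {C : Fin m → Finset α // StrictMono C ∧ ∀ i, C i ∈ 𝒜}

/-- `𝒜 ⊆ 𝒫(X)` is an oversaturated `k`-Sperner system. -/
def IsOversat (X : Finset α) (𝒜 : Finset (Finset α)) (k : ℕ) : Prop :=
  (∀ A ∈ 𝒜, A ⊆ X) ∧
    ∀ S ⊆ X, S ∉ 𝒜 → chainCount 𝒜 (k + 1) < chainCount (insert S 𝒜) (k + 1)

/-- Minimal elements of a family under strict inclusion. -/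
def minimalSets (ℬ : Finset (Finset α)) : Finset (Finset α) :=
  ℬ.filter fun A => ∀ B ∈ ℬ, ¬ B ⊂ A

/-- What remains of `𝒜` after removing the first `i` layers of minimal elements. -/
def canonRest (𝒜 : Finset (Finset α)) : ℕ → Finset (Finset α)
  | 0 => 𝒜
  | i + 1 => canonRest 𝒜 i \ minimalSets (canonRest 𝒜 i)

/-- The `i`-th layer of the canonical decomposition of `𝒜` into antichains. -/
def canonLayer (𝒜 : Finset (Finset α)) (i : ℕ) : Finset (Finset α) :=
  minimalSets (canonRest 𝒜 i)

/-- `satFn n k` : minimum size of a saturated `k`-Sperner system on a ground set of size `n`. -/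
noncomputable def satFn (n k : ℕ) : ℕ :=
  sInf {m | ∃ 𝒜 : Finset (Finset (Fin n)), IsSatSperner Finset.univ 𝒜 k ∧ 𝒜.card = m}

lemma no_separator (X : Finset α) (F : Finset (Finset α)) (k : ℕ)
    (hF : IsSatSperner X F k) (H₁ H₂ : Finset α)
    (h1 : IsHomog X F H₁) (h2 : IsHomog X F H₂)
    (W : Finset α) (hWF : W ∈ F) (hW1 : H₁ ⊆ W) (hW2 : W ∩ H₂ = ∅) : False := by
  obtain ⟨hX1, hcard1, hatom1, _⟩ := h1
  obtain ⟨hX2, hcard2, hatom2, _⟩ := h2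
  obtain ⟨a, ha, b, hb, hab⟩ := Finset.one_lt_card.mp hcard1
  obtain ⟨c, hc, d, hd, hcd⟩ := Finset.one_lt_card.mp hcard2
  have hdisj : ∀ x ∈ H₂, x ∉ W := by
    intro x hx hxW
    exact (Finset.notMem_empty x) (hW2 ▸ Finset.mem_inter.mpr ⟨hxW, hx⟩)
  have haW : a ∈ W := hW1 ha
  have hbW : b ∈ W := hW1 hb
  have hcW : c ∉ W := hdisj c hc
  have hdW : d ∉ W := hdisj d hd
  set T : Finset α := insert c (W.erase a) with hT
  have haT : a ∉ T := by
    simp only [hT, Finset.mem_insert, Finset.mem_erase]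
    rintro (rfl | ⟨h, _⟩)
    · exact hcW haW
    · exact h rfl
  have hbT : b ∈ T := Finset.mem_insert_of_mem (Finset.mem_erase.mpr ⟨hab.symm, hbW⟩)
  have hcT : c ∈ T := Finset.mem_insert_self _ _
  have hdT : d ∉ T := by
    simp only [hT, Finset.mem_insert, Finset.mem_erase]
    rintro (rfl | ⟨_, h⟩)
    · exact hcd rfl
    · exact hdW h
  have hTX : T ⊆ X := by
    intro x hx
    rcases Finset.mem_insert.mp hx with rfl | hx
    · exact hX2 hc
    · exact hF.1 W hWF (Finset.mem_of_mem_erase hx)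
  have hTF : T ∉ F := by
    intro hTF
    rcases hatom2 T hTF with h | h
    · exact (Finset.notMem_empty c) (h ▸ Finset.mem_inter.mpr ⟨hcT, hc⟩)
    · exact hdT (h hd)
  -- key facts about members of F comparable to T
  have low : ∀ S ∈ F, S ⊆ T → S ⊂ W := by
    intro S hS hST
    have hcS : c ∉ S := by
      intro hcS
      rcases hatom2 S hS with h | h
      · exact (Finset.notMem_empty c) (h ▸ Finset.mem_inter.mpr ⟨hcS, hc⟩)
      · exact hdT (hST (h hd))
    have hsub : S ⊆ W := by
      intro x hx
      rcases Finset.mem_insert.mp (hST hx) with rfl | hx'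
      · exact absurd hx hcS
      · exact Finset.mem_of_mem_erase hx'
    refine Finset.ssubset_iff_of_subset hsub |>.mpr ⟨a, haW, ?_⟩
    intro haS
    exact haT (hST haS)
  have high : ∀ S ∈ F, T ⊆ S → W ⊂ S := by
    intro S hS hTS
    have haS : a ∈ S := by
      rcases hatom1 S hS with h | h
      · exact absurd (h ▸ Finset.mem_inter.mpr ⟨hTS hbT, hb⟩) (Finset.notMem_empty b)
      · exact h ha
    have hsub : W ⊆ S := by
      intro x hx
      by_cases hxa : x = a
      · exact hxa ▸ haS
      · exact hTS (Finset.mem_insert_of_mem (Finset.mem_erase.mpr ⟨hxa, hx⟩))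
    exact Finset.ssubset_iff_of_subset hsub |>.mpr ⟨c, hTS hcT, hcW⟩
  -- saturation produces a chain through T; replace T by W
  obtain ⟨C, hmono, hmem⟩ := hF.2.2 T hTX hTF
  have hex : ∃ i₀, C i₀ = T := by
    by_contra h
    push_neg at h
    exact hF.2.1 ⟨C, hmono, fun i => (Finset.mem_insert.mp (hmem i)).resolve_left (h i)⟩
  obtain ⟨i₀, hi₀⟩ := hex
  have hCF : ∀ i, i ≠ i₀ → C i ∈ F := by
    intro i hi
    rcases Finset.mem_insert.mp (hmem i) with h | h
    · exact absurd (hmono.injective (h.trans hi₀.symm)) hi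
    · exact h
  refine hF.2.1 ⟨Function.update C i₀ W, ?_, ?_⟩
  · intro i j hij
    by_cases hi : i = i₀ <;> by_cases hj : j = i₀
    · exact absurd (hi.trans hj.symm) hij.ne
    · rw [hi, Function.update_self, Function.update_of_ne hj]
      exact high (C j) (hCF j hj) (hi₀ ▸ (hmono (hi ▸ hij)).subset)
    · rw [hj, Function.update_self, Function.update_of_ne hi]
      exact low (C i) (hCF i hi) (hi₀ ▸ (hmono (hj ▸ hij)).subset)
    · simpa only [Function.update_of_ne hi, Function.update_of_ne hj] using hmono hij
  · intro i
    by_cases hi : i = i₀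
    · rw [hi, Function.update_self]; exact hWF
    · rw [Function.update_of_ne hi]; exact hCF i hi

theorem stmt_2 (X : Finset α) (F : Finset (Finset α)) (k : ℕ)
    (hF : IsSatSperner X F k) (H₁ H₂ : Finset α)
    (h1 : IsHomog X F H₁) (h2 : IsHomog X F H₂) : H₁ = H₂ := by
  have hU : AtomProp F (H₁ ∪ H₂) := by
    intro S hS
    rcases h1.2.2.1 S hS with hA1 | hA1 <;> rcases h2.2.2.1 S hS with hA2 | hA2
    · left
      rw [Finset.inter_union_distrib_left, hA1, hA2, Finset.union_empty]
    · exact absurd (no_separator X F k hF H₂ H₁ h2 h1 S hS hA2 hA1) id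
    · exact absurd (no_separator X F k hF H₁ H₂ h1 h2 S hS hA1 hA2) id
    · exact Or.inr (Finset.union_subset hA1 hA2)
  have e1 : H₁ ∪ H₂ = H₁ :=
    h1.2.2.2 _ (Finset.union_subset h1.1 h2.1) Finset.subset_union_left hU
  have e2 : H₁ ∪ H₂ = H₂ :=
    h2.2.2.2 _ (Finset.union_subset h1.1 h2.1) Finset.subset_union_right hU
  rw [← e1, e2]
end

section
/- Let A ⊆ P(X) be a saturated antichain (saturated 1-Sperner system) with homogeneous set H. Then every set S ∈ P(X) \ A either contains some small set of A (a set B ∈ A with B ∩ H = ∅) or is contained in some large set of A (a set B ∈ A with H ⊆ B). -/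
open Finset

variable {α : Type*} [DecidableEq α]

theorem stmt_3 (X : Finset α) (𝒜 : Finset (Finset α)) (H : Finset α)
    (h𝒜 : IsSatAntichain X 𝒜) (hH : IsHomog X 𝒜 H) :
    ∀ S ⊆ X, S ∉ 𝒜 →
      (∃ B ∈ 𝒜, B ∩ H = ∅ ∧ B ⊆ S) ∨ (∃ B ∈ 𝒜, H ⊆ B ∧ S ⊆ B) := by
  intro S hSX _
  obtain ⟨hHX, hHcard, hatom, _⟩ := hH
  obtain ⟨_, _, hsat⟩ := h𝒜
  obtain ⟨h, hh⟩ : ∃ h, h ∈ H := Finset.card_pos.mp (by omega)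
  set T : Finset α := insert h (S \ H) with hT
  have hTX : T ⊆ X := by
    intro x hx
    rcases Finset.mem_insert.mp hx with rfl | hx
    · exact hHX hh
    · exact hSX (Finset.mem_sdiff.mp hx).1
  have hTH : T ∩ H = {h} := by
    ext x
    simp only [Finset.mem_inter, Finset.mem_insert, Finset.mem_sdiff, Finset.mem_singleton, hT]
    constructor
    · rintro ⟨rfl | ⟨_, hxH⟩, hxH'⟩
      · rfl
      · exact absurd hxH' hxH
    · rintro rfl; exact ⟨Or.inl rfl, hh⟩
  have hTA : T ∉ 𝒜 := by
    intro hTA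
    rcases hatom T hTA with h1 | h1
    · rw [hTH] at h1; simp at h1
    · have : H ⊆ T ∩ H := Finset.subset_inter h1 Finset.Subset.rfl
      rw [hTH] at this
      have := Finset.card_le_card this
      simp at this; omega
  obtain ⟨C, hC, hcomp⟩ := hsat T hTX hTA
  rcases hcomp with hCT | hTC
  · -- C ⊊ T, C must be small
    left
    have hCsmall : C ∩ H = ∅ := by
      rcases hatom C hC with h1 | h1
      · exact h1
      · exfalso
        have : H ⊆ T ∩ H := Finset.subset_inter (h1.trans hCT.subset) Finset.Subset.rfl
        rw [hTH] at this
        have := Finset.card_le_card this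
        simp at this; omega
    refine ⟨C, hC, hCsmall, ?_⟩
    intro x hx
    have hxT := hCT.subset hx
    rcases Finset.mem_insert.mp hxT with rfl | hxm
    · exfalso
      have : x ∈ C ∩ H := Finset.mem_inter.mpr ⟨hx, hh⟩
      rw [hCsmall] at this; exact absurd this (Finset.notMem_empty x)
    · exact (Finset.mem_sdiff.mp hxm).1
  · -- T ⊊ C, C must be large
    right
    have hhC : h ∈ C := hTC.subset (Finset.mem_insert_self h _)
    have hClarge : H ⊆ C := by
      rcases hatom C hC with h1 | h1
      · exfalso
        have : h ∈ C ∩ H := Finset.mem_inter.mpr ⟨hhC, hh⟩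
        rw [h1] at this; exact absurd this (Finset.notMem_empty h)
      · exact h1
    refine ⟨C, hC, hClarge, ?_⟩
    intro x hx
    by_cases hxH : x ∈ H
    · exact hClarge hxH
    · exact hTC.subset (Finset.mem_insert_of_mem (Finset.mem_sdiff.mpr ⟨hx, hxH⟩))
end

section
/- Let (A_i)_{i=0}^{t} be a layered sequence of pairwise disjoint saturated antichains in P(X), meaning for each 1 ≤ i ≤ t every D ∈ A_i strictly contains some D' ∈ A_{i-1}. Then for each 0 ≤ i ≤ t-1, every A ∈ A_i is strictly contained in some B ∈ A_{i+1}. -/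
open Finset

variable {α : Type*} [DecidableEq α]

theorem stmt_4 (X : Finset α) (t : ℕ) (𝒜 : ℕ → Finset (Finset α))
    (hsat : ∀ i ≤ t, IsSatAntichain X (𝒜 i))
    (hdisj : ∀ i ≤ t, ∀ j ≤ t, i ≠ j → Disjoint (𝒜 i) (𝒜 j))
    (hlay : ∀ i, 1 ≤ i → i ≤ t → ∀ D ∈ 𝒜 i, ∃ D' ∈ 𝒜 (i - 1), D' ⊂ D) :
    ∀ i < t, ∀ A ∈ 𝒜 i, ∃ B ∈ 𝒜 (i + 1), A ⊂ B := by
  intro i hi A hA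
  have hit : i ≤ t := hi.le
  have hit1 : i + 1 ≤ t := hi
  obtain ⟨hsub_i, hanti_i, -⟩ := hsat i hit
  obtain ⟨-, -, hsatur⟩ := hsat (i + 1) hit1
  have hAX : A ⊆ X := hsub_i A hA
  have hAnot : A ∉ 𝒜 (i + 1) := by
    intro h
    exact (Finset.disjoint_left.mp (hdisj i hit (i + 1) hit1 (by omega))) hA h
  obtain ⟨B, hB, hcase⟩ := hsatur A hAX hAnot
  rcases hcase with hBA | hAB
  · obtain ⟨D', hD', hD'B⟩ := hlay (i + 1) (by omega) hit1 B hB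
    simp only [Nat.add_sub_cancel] at hD'
    exact absurd (hD'B.trans hBA) (hanti_i D' hD' A hA)
  · exact ⟨B, hB, hAB⟩
end

section
/- Let (A_i)_{i=0}^{k-1} be a layered sequence of pairwise disjoint saturated antichains in P(X). Then F := ⋃_{i=0}^{k-1} A_i is a saturated k-Sperner system. -/
open Finset

variable {α : Type*} [DecidableEq α]

lemma my_chain_mono (h : ℕ → Finset α) (m : ℕ)
    (hs : ∀ j, j < m → h j ⊂ h (j + 1)) :
    ∀ a b, a < b → b ≤ m → h a ⊂ h b := by
  intro a b hab hbm
  induction b with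
  | zero => omega
  | succ n ih =>
    rcases Nat.lt_succ_iff_lt_or_eq.mp hab with h1 | h1
    · exact (ih h1 (by omega)).trans (hs n (by omega))
    · subst h1; exact hs a (by omega)

lemma my_down (X : Finset α) (k : ℕ) (𝒜 : ℕ → Finset (Finset α))
    (hlay : ∀ i, 1 ≤ i → i < k → ∀ D ∈ 𝒜 i, ∃ D' ∈ 𝒜 (i - 1), D' ⊂ D) :
    ∀ i, i < k → ∀ B ∈ 𝒜 i, ∃ f : ℕ → Finset α, f i = B ∧
      (∀ j, j ≤ i → f j ∈ 𝒜 j) ∧ ∀ j, j < i → f j ⊂ f (j + 1) := by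
  intro i
  induction i with
  | zero =>
    intro _ B hB
    exact ⟨fun _ => B, rfl, fun j hj => by interval_cases j; exact hB,
      fun j hj => by omega⟩
  | succ n ih =>
    intro hik B hB
    obtain ⟨B', hB', hsub⟩ := hlay (n + 1) (by omega) hik B hB
    obtain ⟨f, hf0, hf1, hf2⟩ := ih (by omega) B' hB'
    refine ⟨fun j => if j ≤ n then f j else B, by simp, ?_, ?_⟩
    · intro j hj
      dsimp only
      by_cases hjn : j ≤ n
      · rw [if_pos hjn]; exact hf1 j hjn
      · have hje : j = n + 1 := by omega
        rw [if_neg hjn, hje]; exact hB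
    · intro j hj
      dsimp only
      by_cases hjn : j < n
      · rw [if_pos (by omega : j ≤ n), if_pos (by omega : j + 1 ≤ n)]
        exact hf2 j hjn
      · have hje : j = n := by omega
        subst hje
        rw [if_pos le_rfl, if_neg (by omega), hf0]
        exact hsub

lemma my_noBelow (X : Finset α) (k : ℕ) (𝒜 : ℕ → Finset (Finset α))
    (hsat : ∀ i < k, IsSatAntichain X (𝒜 i))
    (hlay : ∀ i, 1 ≤ i → i < k → ∀ D ∈ 𝒜 i, ∃ D' ∈ 𝒜 (i - 1), D' ⊂ D) :
    ∀ i j, j ≤ i → i < k → ∀ B ∈ 𝒜 i, ∀ C ∈ 𝒜 j, ¬ B ⊂ C := by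
  intro i j hji hik B hB C hC hBC
  obtain ⟨f, hf0, hf1, hf2⟩ := my_down X k 𝒜 hlay i hik B hB
  have hEB : f j ⊆ B := by
    rcases Nat.lt_or_ge j i with h | h
    · exact (hf0 ▸ my_chain_mono f i hf2 j i h le_rfl).subset
    · have : j = i := by omega
      rw [this, hf0]
  exact (hsat j (by omega)).2.1 (f j) (hf1 j hji) C hC (lt_of_le_of_lt hEB hBC)

lemma my_up (X : Finset α) (k : ℕ) (𝒜 : ℕ → Finset (Finset α))
    (hsat : ∀ i < k, IsSatAntichain X (𝒜 i))
    (hdisj : ∀ i < k, ∀ j < k, i ≠ j → Disjoint (𝒜 i) (𝒜 j))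
    (hlay : ∀ i, 1 ≤ i → i < k → ∀ D ∈ 𝒜 i, ∃ D' ∈ 𝒜 (i - 1), D' ⊂ D)
    (t : ℕ) (A : Finset α) (hA : A ∈ 𝒜 t) :
    ∀ i, t ≤ i → i < k → ∃ g : ℕ → Finset α, g t = A ∧
      (∀ j, t ≤ j → j ≤ i → g j ∈ 𝒜 j) ∧ ∀ j, t ≤ j → j < i → g j ⊂ g (j + 1) := by
  intro i hti
  induction i, hti using Nat.le_induction with
  | base =>
    intro _
    refine ⟨fun _ => A, rfl, fun j h1 h2 => ?_, fun j h1 h2 => by omega⟩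
    have : j = t := by omega
    subst this; exact hA
  | succ n hn ih =>
    intro hnk
    obtain ⟨g, hg0, hg1, hg2⟩ := ih (by omega)
    have hgn : g n ∈ 𝒜 n := hg1 n hn le_rfl
    have hgX : g n ⊆ X := (hsat n (by omega)).1 _ hgn
    have hgnot : g n ∉ 𝒜 (n + 1) := fun h =>
      Finset.disjoint_left.mp (hdisj n (by omega) (n + 1) hnk (by omega)) hgn h
    obtain ⟨E, hE, hcase⟩ := (hsat (n + 1) hnk).2.2 (g n) hgX hgnot
    have hgE : g n ⊂ E := by
      rcases hcase with h | h
      · exact absurd h (my_noBelow X k 𝒜 hsat hlay (n + 1) n (by omega) hnk E hE (g n) hgn)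
      · exact h
    refine ⟨fun j => if j ≤ n then g j else E, ?_, ?_, ?_⟩
    · dsimp only; rw [if_pos hn]; exact hg0
    · intro j h1 h2
      dsimp only
      by_cases hjn : j ≤ n
      · rw [if_pos hjn]; exact hg1 j h1 hjn
      · have hje : j = n + 1 := by omega
        rw [if_neg hjn, hje]; exact hE
    · intro j h1 h2
      dsimp only
      by_cases hjn : j < n
      · rw [if_pos (by omega : j ≤ n), if_pos (by omega : j + 1 ≤ n)]
        exact hg2 j h1 hjn
      · have hje : j = n := by omega
        subst hje
        rw [if_pos le_rfl, if_neg (by omega)]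
        exact hgE

theorem stmt_5 (X : Finset α) (k : ℕ) (hk : 1 ≤ k) (𝒜 : ℕ → Finset (Finset α))
    (hsat : ∀ i < k, IsSatAntichain X (𝒜 i))
    (hdisj : ∀ i < k, ∀ j < k, i ≠ j → Disjoint (𝒜 i) (𝒜 j))
    (hlay : ∀ i, 1 ≤ i → i < k → ∀ D ∈ 𝒜 i, ∃ D' ∈ 𝒜 (i - 1), D' ⊂ D) :
    IsSatSperner X ((Finset.range k).biUnion 𝒜) k := by
  classical
  set F := (Finset.range k).biUnion 𝒜 with hF
  have hmemF : ∀ B, B ∈ F ↔ ∃ i, i < k ∧ B ∈ 𝒜 i := by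
    intro B
    simp [hF, Finset.mem_biUnion, Finset.mem_range]
  refine ⟨?_, ?_, ?_⟩
  · -- subsets of X
    intro A hA
    obtain ⟨i, hik, hAi⟩ := (hmemF A).mp hA
    exact (hsat i hik).1 A hAi
  · -- no chain of length k+1
    rintro ⟨C, hC1, hC2⟩
    have hlev : ∀ i : Fin (k + 1), ∃ l, l < k ∧ C i ∈ 𝒜 l := fun i => (hmemF _).mp (hC2 i)
    choose ℓ hℓk hℓm using hlev
    have key : ∀ n, (hn : n ≤ k) → n ≤ ℓ ⟨n, by omega⟩ := by
      intro n
      induction n with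
      | zero => intro _; omega
      | succ m ih =>
        intro hm
        have h1 : ℓ ⟨m, by omega⟩ < ℓ ⟨m + 1, by omega⟩ := by
          by_contra hle
          push_neg at hle
          exact my_noBelow X k 𝒜 hsat hlay (ℓ ⟨m, by omega⟩) (ℓ ⟨m + 1, by omega⟩) hle
            (hℓk _) _ (hℓm ⟨m, by omega⟩) _ (hℓm ⟨m + 1, by omega⟩)
            (hC1 (show (⟨m, by omega⟩ : Fin (k + 1)) < ⟨m + 1, by omega⟩ from by
              simp [Fin.lt_def]))
        have := ih (by omega)
        omega
    have := key k le_rfl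
    have := hℓk ⟨k, by omega⟩
    omega
  · -- saturation
    intro S hSX hSF
    have hSnot : ∀ i, i < k → S ∉ 𝒜 i := fun i hi h =>
      hSF ((hmemF S).mpr ⟨i, hi, h⟩)
    have hT : ∃ t, t ≤ k ∧ (t < k → ¬ ∃ B ∈ 𝒜 t, B ⊂ S) ∧
        ∀ i, i < t → i < k ∧ ∃ B ∈ 𝒜 i, B ⊂ S := by
      have hQ : ∃ n, n ≤ k ∧ (n < k → ¬ ∃ B ∈ 𝒜 n, B ⊂ S) :=
        ⟨k, le_rfl, fun h => absurd h (lt_irrefl k)⟩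
      obtain ⟨htk, htP⟩ := Nat.find_spec hQ
      refine ⟨Nat.find hQ, htk, htP, ?_⟩
      intro i hi
      have h1 := Nat.find_min hQ hi
      push_neg at h1
      have hik : i < k := by omega
      refine ⟨hik, ?_⟩
      rcases h1 (by omega) with ⟨hik', hB⟩
      exact hB
    obtain ⟨t, htk, htP, hP⟩ := hT
    -- the lower chain
    have hf : ∃ f : ℕ → Finset α, (∀ j, j < t → f j ∈ 𝒜 j) ∧
        (∀ j, j + 1 < t → f j ⊂ f (j + 1)) ∧ (∀ j, j + 1 = t → f j ⊂ S) := by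
      rcases Nat.eq_zero_or_pos t with h0 | h0
      · exact ⟨fun _ => ∅, fun j hj => by omega, fun j hj => by omega, fun j hj => by omega⟩
      · obtain ⟨ht1k, B, hB, hBS⟩ := hP (t - 1) (by omega)
        obtain ⟨f, hf0, hf1, hf2⟩ := my_down X k 𝒜 hlay (t - 1) ht1k B hB
        refine ⟨f, fun j hj => hf1 j (by omega), fun j hj => hf2 j (by omega), ?_⟩
        intro j hj
        have : j = t - 1 := by omega
        subst this
        rw [hf0]; exact hBS
    -- the upper chain
    have hg : ∃ g : ℕ → Finset α, (t < k → S ⊂ g t) ∧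
        (∀ j, t ≤ j → j < k → g j ∈ 𝒜 j) ∧
        (∀ j, t ≤ j → j + 1 < k → g j ⊂ g (j + 1)) := by
      rcases Nat.lt_or_ge t k with hlt | hge
      · have hnP := htP hlt
        push_neg at hnP
        obtain ⟨A, hA, hcase⟩ := (hsat t hlt).2.2 S hSX (hSnot t hlt)
        have hSA : S ⊂ A := by
          rcases hcase with h | h
          · exact absurd h (hnP A hA)
          · exact h
        obtain ⟨g, hg0, hg1, hg2⟩ := my_up X k 𝒜 hsat hdisj hlay t A hA (k - 1)
          (by omega) (by omega)
        refine ⟨g, fun _ => by rw [hg0]; exact hSA,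
          fun j h1 h2 => hg1 j h1 (by omega), fun j h1 h2 => hg2 j h1 (by omega)⟩
      · exact ⟨fun _ => ∅, fun h => by omega, fun j h1 h2 => by omega,
          fun j h1 h2 => by omega⟩
    obtain ⟨f, hf1, hf2, hf3⟩ := hf
    obtain ⟨g, hg1, hg2, hg3⟩ := hg
    set h : ℕ → Finset α := fun j => if j < t then f j else if j = t then S else g (j - 1)
      with hh
    have hadj : ∀ j, j < k → h j ⊂ h (j + 1) := by
      intro j hj
      rcases Nat.lt_trichotomy (j + 1) t with hc | hc | hc
      · have e1 : h j = f j := if_pos (by omega)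
        have e2 : h (j + 1) = f (j + 1) := if_pos hc
        rw [e1, e2]; exact hf2 j hc
      · have e1 : h j = f j := if_pos (by omega)
        have e2 : h (j + 1) = S := by rw [hh]; simp only; rw [if_neg (by omega), if_pos hc]
        rw [e1, e2]; exact hf3 j hc
      · by_cases hjt : j = t
        · -- j = t
          have e1 : h j = S := by rw [hh]; simp only; rw [if_neg (by omega), if_pos hjt]
          have e2 : h (j + 1) = g t := by
            have hjj : j + 1 - 1 = t := by omega
            rw [hh]; simp only; rw [if_neg (by omega), if_neg (by omega), hjj]
          rw [e1, e2]
          exact hg1 (by omega)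
        · -- j > t
          have hgt : t < j := by omega
          have e1 : h j = g (j - 1) := by
            rw [hh]; simp only; rw [if_neg (by omega), if_neg (by omega)]
          have e2 : h (j + 1) = g j := by
            have hjj : j + 1 - 1 = j := by omega
            rw [hh]; simp only; rw [if_neg (by omega), if_neg (by omega), hjj]
          rw [e1, e2]
          have := hg3 (j - 1) (by omega) (by omega)
          rwa [Nat.sub_add_cancel (by omega)] at this
    have hmem : ∀ j, j ≤ k → h j ∈ insert S F := by
      intro j hj
      rcases Nat.lt_trichotomy j t with hc | hc | hc
      · have e1 : h j = f j := if_pos hc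
        rw [e1]
        exact Finset.mem_insert_of_mem ((hmemF _).mpr ⟨j, by omega, hf1 j hc⟩)
      · have e1 : h j = S := by rw [hh]; simp only; rw [if_neg (by omega), if_pos hc]
        rw [e1]; exact Finset.mem_insert_self _ _
      · have e1 : h j = g (j - 1) := by
          rw [hh]; simp only; rw [if_neg (by omega), if_neg (by omega)]
        rw [e1]
        exact Finset.mem_insert_of_mem
          ((hmemF _).mpr ⟨j - 1, by omega, hg2 (j - 1) (by omega) (by omega)⟩)
    refine ⟨fun i => h i, ?_, ?_⟩
    · intro a b hab
      exact my_chain_mono h k hadj a b (by exact_mod_cast hab) (by omega)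
    · intro i
      exact hmem i (by omega)
end

section
/- Let F ⊆ P(X) be a saturated k-Sperner system with a homogeneous set H, and let (A_i)_{i=0}^{k-1} be its canonical decomposition into antichains (A_i is the set of minimal elements of F \ (A_0 ∪ ... ∪ A_{i-1})). Then each A_i is a saturated antichain. -/
open Finset

variable {α : Type*} [DecidableEq α]

set_option linter.unusedSectionVars false

def NChain (𝒜 : Finset (Finset α)) (C : ℕ → Finset α) (n : ℕ) : Prop :=
  (∀ t, t < n → C t ⊂ C (t+1)) ∧ (∀ t, t ≤ n → C t ∈ 𝒜)

lemma nchain_lt {𝒜 : Finset (Finset α)} {C : ℕ → Finset α} {n : ℕ} (h : NChain 𝒜 C n) :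
    ∀ a b, a < b → b ≤ n → C a ⊂ C b := by
  intro a b hab hbn
  induction b with
  | zero => omega
  | succ b ih =>
    rcases Nat.lt_succ_iff_lt_or_eq.mp hab with h' | h'
    · exact lt_trans (ih h' (by omega)) (h.1 b (by omega))
    · subst h'; exact h.1 a (by omega)

lemma nchain_mono {𝒜 : Finset (Finset α)} {C : ℕ → Finset α} {m n : ℕ} (h : NChain 𝒜 C n)
    (hmn : m ≤ n) : NChain 𝒜 C m :=
  ⟨fun t ht => h.1 t (by omega), fun t ht => h.2 t (by omega)⟩

lemma nchain_hasChain {𝒜 : Finset (Finset α)} {C : ℕ → Finset α} {n m : ℕ}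
    (h : NChain 𝒜 C n) (hmn : m ≤ n + 1) : HasChain 𝒜 m := by
  refine ⟨fun i => C i, ?_, fun i => h.2 i (by have := i.isLt; omega)⟩
  intro a b hab
  exact nchain_lt h a b (Fin.lt_iff_val_lt_val.mp hab) (by have := b.isLt; omega)

lemma nchain_absurd {𝒜 : Finset (Finset α)} {C : ℕ → Finset α} {n k : ℕ}
    (hS : ¬ HasChain 𝒜 (k + 1)) (h : NChain 𝒜 C n) (hk : k ≤ n) : False :=
  hS (nchain_hasChain h (by omega))

lemma hasChain_nchain {𝒜 : Finset (Finset α)} {n : ℕ} (h : HasChain 𝒜 (n + 1)) :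
    ∃ C : ℕ → Finset α, NChain 𝒜 C n := by
  obtain ⟨C, hmono, hmem⟩ := h
  refine ⟨fun t => C ⟨min t n, by omega⟩, ⟨?_, fun t _ => hmem _⟩⟩
  intro t ht
  apply hmono
  simp [Fin.lt_iff_val_lt_val]; omega

lemma nchain_shift {𝒜 : Finset (Finset α)} {C : ℕ → Finset α} {n a : ℕ} (h : NChain 𝒜 C n)
    (ha : a ≤ n) : NChain 𝒜 (fun t => C (t + a)) (n - a) := by
  constructor
  · intro t ht
    show C (t + a) ⊂ C (t + 1 + a)
    have e : t + 1 + a = (t + a) + 1 := by omega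
    rw [e]
    exact h.1 (t + a) (by omega)
  · intro t ht; exact h.2 (t + a) (by omega)

lemma nchain_splice {𝒜 : Finset (Finset α)} {C D : ℕ → Finset α} {a b : ℕ}
    (hC : NChain 𝒜 C a) (hD : NChain 𝒜 D b) (hab : C a = D 0) :
    NChain 𝒜 (fun t => if t ≤ a then C t else D (t - a)) (a + b) := by
  constructor
  · intro t ht
    by_cases h1 : t + 1 ≤ a
    · simp only [if_pos (by omega : t ≤ a), if_pos h1]
      exact hC.1 t (by omega)
    · by_cases h2 : t ≤ a
      · have hta : t = a := by omega
        subst hta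
        simp only [if_pos h2, if_neg h1]
        rw [hab, show t + 1 - t = 1 by omega]
        exact hD.1 0 (by omega)
      · simp only [if_neg h2, if_neg h1]
        have : t + 1 - a = (t - a) + 1 := by omega
        rw [this]
        exact hD.1 (t - a) (by omega)
  · intro t ht
    by_cases h2 : t ≤ a
    · simp only [if_pos h2]; exact hC.2 t h2
    · simp only [if_neg h2]; exact hD.2 (t - a) (by omega)

lemma rest_succ (F : Finset (Finset α)) (i : ℕ) :
    canonRest F (i+1) = canonRest F i \ canonLayer F i := rfl

lemma rest_subset (F : Finset (Finset α)) : ∀ i, canonRest F i ⊆ F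
  | 0 => Finset.Subset.refl _
  | i + 1 => (sdiff_subset).trans (rest_subset F i)

lemma layer_subset_rest {F : Finset (Finset α)} {i : ℕ} : canonLayer F i ⊆ canonRest F i :=
  filter_subset _ _

lemma layer_subset (F : Finset (Finset α)) (i : ℕ) : canonLayer F i ⊆ F :=
  layer_subset_rest.trans (rest_subset F i)

lemma rest_antitone {F : Finset (Finset α)} : ∀ {i j : ℕ}, j ≤ i → canonRest F i ⊆ canonRest F j := by
  intro i
  induction i with
  | zero => intro j hj; simp_all
  | succ i ih =>
    intro j hj
    rcases Nat.le_succ_iff.mp hj  with h | h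
    · exact Finset.Subset.trans (sdiff_subset) (ih h)
    · subst h; exact Finset.Subset.refl _

lemma layer_not_rest {F : Finset (Finset α)} {i : ℕ} {B : Finset α} (h : B ∈ canonLayer F i) :
    B ∉ canonRest F (i+1) := by
  rw [rest_succ]; simp [mem_sdiff, h]

lemma mem_layer_of_not_rest_succ {F : Finset (Finset α)} {i : ℕ} {B : Finset α}
    (h1 : B ∈ canonRest F i) (h2 : B ∉ canonRest F (i+1)) : B ∈ canonLayer F i := by
  rw [rest_succ, mem_sdiff] at h2; tauto

lemma rest_succ_of_lt {F : Finset (Finset α)} {i : ℕ} {B B' : Finset α}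
    (hB : B ∈ canonRest F i) (hB' : B' ∈ canonRest F i) (hlt : B' ⊂ B) :
    B ∈ canonRest F (i+1) := by
  rw [rest_succ, mem_sdiff]
  refine ⟨hB, fun hmin => ?_⟩
  exact (mem_filter.mp hmin).2 B' hB' hlt

lemma layer_ge {F : Finset (Finset α)} {i j : ℕ} {B : Finset α} (hB : B ∈ canonLayer F j)
    (hBi : B ∈ canonRest F i) : i ≤ j := by
  by_contra h
  exact layer_not_rest hB (rest_antitone (by omega) hBi)

lemma exists_layer_below {F : Finset (Finset α)} {i : ℕ} {B : Finset α}
    (hB : B ∈ canonRest F (i+1)) : ∃ A ∈ canonLayer F i, A ⊂ B := by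
  rw [rest_succ, mem_sdiff] at hB
  obtain ⟨hBr, hBm⟩ := hB
  have hne : (canonRest F i).filter (fun A => A ⊂ B) |>.Nonempty := by
    rw [canonLayer, minimalSets, mem_filter] at hBm
    push_neg at hBm
    obtain ⟨A, hA, hAB⟩ := hBm hBr
    exact ⟨A, mem_filter.mpr ⟨hA, hAB⟩⟩
  obtain ⟨M, hMm⟩ := Finset.exists_minimal hne
  have hM := hMm.prop
  have hmin : ∀ x ∈ (canonRest F i).filter (fun A => A ⊂ B), ¬ x < M :=
    fun x hx hlt => hMm.not_lt hx hlt
  rw [mem_filter] at hM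
  refine ⟨M, ?_, hM.2⟩
  rw [canonLayer, minimalSets, mem_filter]
  refine ⟨hM.1, fun A hA hAM => ?_⟩
  exact hmin A (mem_filter.mpr ⟨hA, hAM.trans hM.2⟩) hAM

lemma rest_succ_of_lt' {F : Finset (Finset α)} :
    ∀ (i : ℕ) {B B' : Finset α}, B' ∈ canonRest F i → B ∈ F → B' ⊂ B → B ∈ canonRest F (i+1) := by
  intro i
  induction i with
  | zero => intro B B' h1 h2 h3; exact rest_succ_of_lt h2 h1 h3
  | succ i ih =>
    intro B B' h1 h2 h3
    have hB : B ∈ canonRest F (i+1) := ih (rest_antitone (by omega) h1) h2 h3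
    exact rest_succ_of_lt hB h1 h3

lemma chain_ending_at {F : Finset (Finset α)} :
    ∀ (i : ℕ) {B : Finset α}, B ∈ canonRest F i →
      ∃ C : ℕ → Finset α, NChain F C i ∧ C i = B := by
  intro i
  induction i with
  | zero =>
    intro B hB
    exact ⟨fun _ => B, ⟨fun t ht => by omega, fun t ht => hB⟩, rfl⟩
  | succ i ih =>
    intro B hB
    obtain ⟨A, hA, hAB⟩ := exists_layer_below hB
    obtain ⟨C, hC, hCi⟩ := ih (layer_subset_rest hA)
    refine ⟨fun t => if t ≤ i then C t else B, ⟨?_, ?_⟩, by simp⟩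
    · intro t ht
      by_cases h1 : t + 1 ≤ i
      · simp only [if_pos (by omega : t ≤ i), if_pos h1]
        exact hC.1 t (by omega)
      · by_cases h2 : t ≤ i
        · have : t = i := by omega
          subst this
          simp only [if_pos h2, if_neg h1, hCi]
          exact hAB
        · omega
    · intro t ht
      by_cases h2 : t ≤ i
      · simp only [if_pos h2]; exact hC.2 t h2
      · simp only [if_neg h2]
        exact (rest_subset F (i+1)) hB

lemma rest_of_chain {F : Finset (Finset α)} :
    ∀ (n : ℕ) {C : ℕ → Finset α}, NChain F C n → C n ∈ canonRest F n := by
  intro n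
  induction n with
  | zero => intro C hC; exact hC.2 0 le_rfl
  | succ n ih =>
    intro C hC
    have h1 : C n ∈ canonRest F n := ih (nchain_mono hC (by omega))
    exact rest_succ_of_lt' n h1 (hC.2 (n+1) le_rfl) (hC.1 n (by omega))

lemma exists_layer_mem {F : Finset (Finset α)} {k : ℕ} (hSp : ¬ HasChain F (k+1)) {B : Finset α}
    (hB : B ∈ F) : ∃ j < k, B ∈ canonLayer F j := by
  have hnk : B ∉ canonRest F k := by
    intro h
    obtain ⟨C, hC, hCk⟩ := chain_ending_at k h
    exact nchain_absurd hSp hC le_rfl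
  have key : ∀ (i : ℕ), B ∉ canonRest F i → ∃ j < i, B ∈ canonLayer F j := by
    intro i
    induction i with
    | zero => intro h; exact absurd hB h
    | succ i ih =>
      intro h
      by_cases h2 : B ∈ canonRest F i
      · exact ⟨i, by omega, mem_layer_of_not_rest_succ h2 h⟩
      · obtain ⟨j, hj, hj2⟩ := ih h2
        exact ⟨j, by omega, hj2⟩
  exact key k hnk

lemma exists_layer_le {F : Finset (Finset α)} {k : ℕ} (hSp : ¬ HasChain F (k+1)) {i : ℕ}
    {B : Finset α} (hB : B ∈ canonRest F i) : ∃ A ∈ canonLayer F i, A ⊆ B := by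
  obtain ⟨j, hjk, hj⟩ := exists_layer_mem hSp (rest_subset F i hB)
  have hij : i ≤ j := layer_ge hj hB
  rcases eq_or_lt_of_le hij with h | h
  · have hj' : B ∈ canonLayer F i := by rw [h]; exact hj
    exact ⟨B, hj', fun x hx => hx⟩
  · obtain ⟨A, hA, hAB⟩ := exists_layer_below (rest_antitone (by omega : i + 1 ≤ j) (layer_subset_rest hj))
    exact ⟨A, hA, hAB.subset⟩

lemma sat_chain {X : Finset α} {F : Finset (Finset α)} {k : ℕ} (hF : IsSatSperner X F k)
    {S : Finset α} (hSX : S ⊆ X) (hSF : S ∉ F) :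
    ∃ C : ℕ → Finset α, ∃ m, m ≤ k ∧ NChain (insert S F) C k ∧ C m = S ∧
      (∀ t, t ≤ k → t ≠ m → C t ∈ F) := by
  obtain ⟨C, hC⟩ := hasChain_nchain (hF.2.2 S hSX hSF)
  have hex : ∃ m, m ≤ k ∧ C m = S := by
    by_contra hnone
    push_neg at hnone
    have : NChain F C k := ⟨hC.1, fun t ht => by
      rcases mem_insert.mp (hC.2 t ht) with h | h
      · exact absurd h (hnone t ht)
      · exact h⟩
    exact nchain_absurd hF.2.1 this le_rfl
  obtain ⟨m, hm, hCm⟩ := hex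
  refine ⟨C, m, hm, hC, hCm, fun t ht htm => ?_⟩
  rcases mem_insert.mp (hC.2 t ht) with h | h
  · exfalso
    rcases Nat.lt_or_ge t m with hlt | hge
    · exact (nchain_lt hC t m hlt hm).ne (h.trans hCm.symm)
    · exact (nchain_lt hC m t (by omega) ht).ne (hCm.trans h.symm)
  · exact h

lemma replace_chain {F : Finset (Finset α)} {S B : Finset α} {C : ℕ → Finset α} {k m : ℕ}
    (hC : NChain (insert S F) C k) (hm : m ≤ k)
    (hmem : ∀ t, t ≤ k → t ≠ m → C t ∈ F) (hB : B ∈ F)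
    (h1 : 1 ≤ m → C (m-1) ⊂ B) (h2 : m < k → B ⊂ C (m+1)) :
    NChain F (fun t => if t = m then B else C t) k := by
  constructor
  · intro t ht
    by_cases he : t = m
    · subst he
      simp only [if_pos rfl, if_neg (by omega : ¬ t + 1 = t)]
      exact h2 ht
    · by_cases he2 : t + 1 = m
      · simp only [if_neg he, if_pos he2]
        have h3 := h1 (by omega)
        have e : t = m - 1 := by omega
        rw [e]; exact h3
      · simp only [if_neg he, if_neg he2]
        exact hC.1 t ht
  · intro t ht
    by_cases he : t = m
    · simp only [if_pos he]; exact hB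
    · simp only [if_neg he]; exact hmem t ht he

lemma drop_chain {F : Finset (Finset α)} {S : Finset α} {C : ℕ → Finset α} {k m : ℕ}
    (hC : NChain (insert S F) C k) (hm : m ≤ k) (hk : 1 ≤ k)
    (hmem : ∀ t, t ≤ k → t ≠ m → C t ∈ F) :
    NChain F (fun t => if t < m then C t else C (t+1)) (k-1) := by
  constructor
  · intro t ht
    by_cases h1 : t + 1 < m
    · simp only [if_pos (by omega : t < m), if_pos h1]
      exact hC.1 t (by omega)
    · by_cases h2 : t < m
      · simp only [if_pos h2, if_neg (by omega : ¬ t+1 < m)]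
        exact lt_trans (hC.1 t (by omega)) (hC.1 (t+1) (by omega))
      · simp only [if_neg h2, if_neg (by omega : ¬ t+1 < m)]
        exact hC.1 (t+1) (by omega)
  · intro t ht
    by_cases h2 : t < m
    · simp only [if_pos h2]; exact hmem t (by omega) (by omega)
    · simp only [if_neg h2]; exact hmem (t+1) (by omega) (by omega)

lemma grading {X : Finset α} {F : Finset (Finset α)} {k : ℕ} (hF : IsSatSperner X F k)
    {H : Finset α} (hHX : H ⊆ X) (hcard : 2 ≤ H.card) (hat : AtomProp F H)
    {B : Finset α} (hB : B ∈ F) :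
    ∃ C : ℕ → Finset α, ∃ m, m ≤ k - 1 ∧ NChain F C (k-1) ∧ C m = B := by
  rcases Nat.eq_zero_or_pos k with hk0 | hk
  · exact ⟨fun _ => B, 0, by omega, ⟨fun t ht => absurd ht (by omega), fun t _ => hB⟩, rfl⟩
  obtain ⟨h, hhH, h', hh'H, hne⟩ := Finset.one_lt_card.mp (by omega : 1 < H.card)
  have hdisj : ∀ T : Finset α, T ∩ H = ∅ → ∀ x ∈ H, x ∉ T := by
    intro T hT x hx hxT
    have : x ∈ T ∩ H := mem_inter.mpr ⟨hxT, hx⟩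
    rw [hT] at this
    exact absurd this (notMem_empty x)
  rcases hat B hB with hdis | hsub
  · -- B ∩ H = ∅
    have hhB : h ∉ B := hdisj B hdis h hhH
    have hh'B : h' ∉ B := hdisj B hdis h' hh'H
    have hBS : B ⊂ insert h B := Finset.ssubset_insert hhB
    have hSX : insert h B ⊆ X := Finset.insert_subset (hHX hhH) (hF.1 B hB)
    have hSF : insert h B ∉ F := by
      intro hSF
      rcases hat _ hSF with hd | hs
      · exact hdisj _ hd h hhH (mem_insert_self h B)
      · rcases mem_insert.mp (hs hh'H) with he | hmem
        · exact hne (he ▸ rfl)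
        · exact hh'B hmem
    obtain ⟨C, m, hm, hC, hCm, hmem⟩ := sat_chain hF hSX hSF
    have hBC : m < k → B ⊂ C (m+1) := by
      intro hmk
      have h3 : B ⊂ C m := by rw [hCm]; exact hBS
      exact lt_trans h3 (hC.1 m hmk)
    have hsubB : ∀ t, t ≤ k → t ≠ m → C t ⊂ C m → C t ⊆ B := by
      intro t ht htm hts
      have htF : C t ∈ F := hmem t ht htm
      rcases hat _ htF with hd | hs
      · intro x hx
        have hxS : x ∈ insert h B := by rw [← hCm]; exact hts.subset hx
        rcases mem_insert.mp hxS with he | h2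
        · exact absurd hx (he ▸ hdisj _ hd h hhH)
        · exact h2
      · exfalso
        have : h' ∈ insert h B := by rw [← hCm]; exact hts.subset (hs hh'H)
        rcases mem_insert.mp this with he | h2
        · exact hne (he ▸ rfl)
        · exact hh'B h2
    have key : 1 ≤ m ∧ C (m-1) = B := by
      by_contra hcon
      refine nchain_absurd hF.2.1 (replace_chain hC hm hmem hB ?_ hBC) le_rfl
      intro h1m
      have hsb : C (m-1) ⊆ B :=
        hsubB (m-1) (by omega) (by omega) (nchain_lt hC (m-1) m (by omega) hm)
      have hnb : C (m-1) ≠ B := fun he => hcon ⟨h1m, he⟩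
      exact lt_of_le_of_ne hsb hnb
    obtain ⟨h1m, hcb⟩ := key
    refine ⟨fun t => if t < m then C t else C (t+1), m-1, by omega,
      drop_chain hC hm hk hmem, ?_⟩
    simp only [if_pos (by omega : m-1 < m)]
    exact hcb
  · -- H ⊆ B
    have hhB : h ∈ B := hsub hhH
    have hh'B : h' ∈ B := hsub hh'H
    have hSB : B.erase h ⊂ B := Finset.erase_ssubset hhB
    have hSX : B.erase h ⊆ X := (Finset.erase_subset h B).trans (hF.1 B hB)
    have hh'S : h' ∈ B.erase h := Finset.mem_erase.mpr ⟨hne.symm, hh'B⟩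
    have hSF : B.erase h ∉ F := by
      intro hSF
      rcases hat _ hSF with hd | hs
      · exact hdisj _ hd h' hh'H hh'S
      · exact (Finset.mem_erase.mp (hs hhH)).1 rfl
    obtain ⟨C, m, hm, hC, hCm, hmem⟩ := sat_chain hF hSX hSF
    have hCB : 1 ≤ m → C (m-1) ⊂ B := by
      intro h1
      have h3 : C m ⊂ B := by rw [hCm]; exact hSB
      exact lt_trans (nchain_lt hC (m-1) m (by omega) hm) h3
    have hsupB : ∀ t, t ≤ k → t ≠ m → C m ⊂ C t → B ⊆ C t := by
      intro t ht htm hts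
      have htF : C t ∈ F := hmem t ht htm
      rcases hat _ htF with hd | hs
      · exfalso
        have : h' ∈ C t := hts.subset (by rw [hCm]; exact hh'S)
        exact hdisj _ hd h' hh'H this
      · intro x hx
        by_cases hxh : x = h
        · exact hxh ▸ hs hhH
        · exact hts.subset (by rw [hCm]; exact Finset.mem_erase.mpr ⟨hxh, hx⟩)
    have key : m < k ∧ C (m+1) = B := by
      by_contra hcon
      refine nchain_absurd hF.2.1 (replace_chain hC hm hmem hB hCB ?_) le_rfl
      intro hmk
      have hsb : B ⊆ C (m+1) := hsupB (m+1) (by omega) (by omega) (hC.1 m hmk)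
      have hnb : B ≠ C (m+1) := fun he => hcon ⟨hmk, he.symm⟩
      exact lt_of_le_of_ne hsb hnb
    obtain ⟨hmk, hcb⟩ := key
    refine ⟨fun t => if t < m then C t else C (t+1), m, by omega,
      drop_chain hC hm hk hmem, ?_⟩
    simp only [if_neg (by omega : ¬ m < m)]
    exact hcb

lemma up_step {X : Finset α} {F : Finset (Finset α)} {k : ℕ} (hF : IsSatSperner X F k)
    {H : Finset α} (hHX : H ⊆ X) (hcard : 2 ≤ H.card) (hat : AtomProp F H)
    {B : Finset α} {j : ℕ} (hB : B ∈ canonLayer F j) (hjk : j + 1 ≤ k - 1) :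
    ∃ A ∈ canonLayer F (j+1), B ⊆ A := by
  obtain ⟨C, m, hm, hC, hCm⟩ := grading hF hHX hcard hat (layer_subset F j hB)
  have hBm : B ∈ canonRest F m := by
    rw [← hCm]; exact rest_of_chain m (nchain_mono hC hm)
  have hmj : m ≤ j := layer_ge hB hBm
  have hBA : B ⊂ C (m+1) := by rw [← hCm]; exact hC.1 m (by omega)
  have hAF : C (m+1) ∈ F := hC.2 (m+1) (by omega)
  have hA1 : C (m+1) ∈ canonRest F (j+1) := rest_succ_of_lt' j (layer_subset_rest hB) hAF hBA
  have hA2 : C (m+1) ∉ canonRest F (j+2) := by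
    intro hA2
    obtain ⟨E, hE, hEe⟩ := chain_ending_at (j+2) hA2
    have hshift : NChain F (fun t => C (t + (m+1))) (k-1-(m+1)) := nchain_shift hC (by omega)
    have hsp := nchain_splice hE hshift (by simpa using hEe)
    exact nchain_absurd hF.2.1 hsp (by omega)
  exact ⟨C (m+1), mem_layer_of_not_rest_succ hA1 hA2, hBA.subset⟩

lemma up_iter {X : Finset α} {F : Finset (Finset α)} {k : ℕ} (hF : IsSatSperner X F k)
    {H : Finset α} (hHX : H ⊆ X) (hcard : 2 ≤ H.card) (hat : AtomProp F H)
    {B : Finset α} {j : ℕ} (hB : B ∈ canonLayer F j) :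
    ∀ d, j + d ≤ k - 1 → ∃ A ∈ canonLayer F (j+d), B ⊆ A := by
  intro d
  induction d with
  | zero => intro _; exact ⟨B, hB, fun x hx => hx⟩
  | succ d ih =>
    intro hd
    obtain ⟨A, hA, hBA⟩ := ih (by omega)
    obtain ⟨A', hA', hAA'⟩ := up_step hF hHX hcard hat hA (by omega)
    exact ⟨A', hA', hBA.trans hAA'⟩

theorem stmt_6 (X : Finset α) (F : Finset (Finset α)) (k : ℕ)
    (hF : IsSatSperner X F k) (H : Finset α) (hH : IsHomog X F H) :
    ∀ i < k, IsSatAntichain X (canonLayer F i) := by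
  obtain ⟨hHX, hcard, hat, -⟩ := hH
  intro i hik
  have hSp := hF.2.1
  refine ⟨fun A hA => hF.1 A (layer_subset F i hA), ?_, ?_⟩
  · intro A hA B hB
    have hB' := hB
    rw [canonLayer, minimalSets, mem_filter] at hB'
    exact hB'.2 A (layer_subset_rest hA)
  · intro S hSX hSnot
    by_cases hSF : S ∈ F
    · obtain ⟨j, hjk, hj⟩ := exists_layer_mem hSp hSF
      rcases lt_trichotomy j i with hlt | heq | hgt
      · obtain ⟨A, hA, hBA⟩ := up_iter hF hHX hcard hat hj (i - j) (by omega)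
        rw [show j + (i-j) = i by omega] at hA
        refine ⟨A, hA, Or.inr (lt_of_le_of_ne hBA (fun he => hSnot (he ▸ hA)))⟩
      · exact absurd (heq ▸ hj) hSnot
      · obtain ⟨A, hA, hAS⟩ :=
          exists_layer_below (rest_antitone (by omega : i+1 ≤ j) (layer_subset_rest hj))
        exact ⟨A, hA, Or.inl hAS⟩
    · obtain ⟨C, m, hm, hC, hCm, hmem⟩ := sat_chain hF hSX hSF
      rcases Nat.lt_or_ge i m with him | him
      · -- i < m : some A ∈ layer i is below C (m-1) ⊂ S
        have h1 : NChain F C (m-1) :=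
          ⟨fun t ht => hC.1 t (by omega), fun t ht => hmem t (by omega) (by omega)⟩
        have h3 : C (m-1) ∈ canonRest F i :=
          rest_antitone (by omega) (rest_of_chain (m-1) h1)
        obtain ⟨A, hA, hAsub⟩ := exists_layer_le hSp h3
        have h4 : C (m-1) ⊂ S := by
          have h5 := hC.1 (m-1) (by omega : m-1 < k)
          rw [show m-1+1 = m by omega, hCm] at h5
          exact h5
        exact ⟨A, hA, Or.inl (lt_of_le_of_lt hAsub h4)⟩
      · -- m ≤ i : C (m+1) has layer ≤ m ≤ i, go up to layer i
        have hmk : m < k := by omega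
        have hup : C (m+1) ∉ canonRest F (m+1) := by
          intro hcon
          obtain ⟨E, hE, hEe⟩ := chain_ending_at (m+1) hcon
          have hshift : NChain F (fun t => C (t + (m+1))) (k-(m+1)) := by
            refine ⟨fun t ht => ?_, fun t ht => hmem (t+(m+1)) (by omega) (by omega)⟩
            show C (t + (m+1)) ⊂ C (t + 1 + (m+1))
            rw [show t + 1 + (m+1) = (t + (m+1)) + 1 by omega]
            exact hC.1 (t + (m+1)) (by omega)
          have hsp := nchain_splice hE hshift (by simpa using hEe)
          exact nchain_absurd hSp hsp (by omega)
        have hCF : C (m+1) ∈ F := hmem (m+1) (by omega) (by omega)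
        obtain ⟨j', hj'k, hj'⟩ := exists_layer_mem hSp hCF
        have hj'm : j' ≤ m := by
          by_contra hcon
          exact hup (rest_antitone (by omega : m+1 ≤ j') (layer_subset_rest hj'))
        obtain ⟨A, hA, hBA⟩ := up_iter hF hHX hcard hat hj' (i - j') (by omega)
        rw [show j' + (i-j') = i by omega] at hA
        have hSC : S ⊂ C (m+1) := by rw [← hCm]; exact hC.1 m hmk
        exact ⟨A, hA, Or.inr (lt_of_lt_of_le hSC hBA)⟩
end

section
/- Let X₁ and X₂ be disjoint finite sets, and for i ∈ {1,2} let F_i ⊆ P(X_i) be a saturated k_i-Sperner system containing ∅ and X_i, with homogeneous set H_i ⊆ X_i, such that every member of F_i is either disjoint from H_i (small) or contains H_i (large). Define G := {A ∪ B : A ∈ F₁ small, B ∈ F₂ small} ∪ {S ∪ T : S ∈ F₁ large, T ∈ F₂ large} ⊆ P(X₁ ∪ X₂). Then G is a saturated (k₁ + k₂ - 2)-Sperner system containing ∅ and X₁ ∪ X₂, and H₁ ∪ H₂ is homogeneous for G. -/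
open Finset

variable {α : Type*} [DecidableEq α]

/-- The combined system of Lemma 11: small sets joined with small sets, large with large. -/
def combineSys (H₁ H₂ : Finset α) (F₁ F₂ : Finset (Finset α)) : Finset (Finset α) :=
  ((F₁.filter fun S => S ∩ H₁ = ∅) ×ˢ (F₂.filter fun S => S ∩ H₂ = ∅)).image
      (fun p => p.1 ∪ p.2) ∪
  ((F₁.filter fun S => H₁ ⊆ S) ×ˢ (F₂.filter fun S => H₂ ⊆ S)).image
      (fun p => p.1 ∪ p.2)

set_option linter.unusedSectionVars false
section Helpers

lemma hasChain_of_list (𝒜 : Finset (Finset α)) (L : List (Finset α))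
    (hc : List.IsChain (· ⊂ ·) L) (hm : ∀ x ∈ L, x ∈ 𝒜) : HasChain 𝒜 L.length := by
  refine ⟨fun i => L.get i, ?_, fun i => hm _ (L.get_mem i)⟩
  intro i j hij
  exact List.pairwise_iff_get.mp (List.isChain_iff_pairwise.mp hc) i j hij

lemma hasChain_mono {𝒜 : Finset (Finset α)} {m n : ℕ} (h : n ≤ m) :
    HasChain 𝒜 m → HasChain 𝒜 n := by
  rintro ⟨C, hC, hmem⟩
  exact ⟨C ∘ Fin.castLE h, hC.comp (Fin.strictMono_castLE h), fun i => hmem _⟩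

lemma chain'_ofFn {n : ℕ} (f : Fin n → Finset α) (hf : ∀ i j : Fin n, i < j → f i ⊂ f j) :
    List.IsChain (· ⊂ ·) (List.ofFn f) := by
  rw [List.isChain_iff_getElem]
  intro i h
  rw [List.getElem_ofFn, List.getElem_ofFn]
  apply hf
  simp only [Fin.lt_def, Fin.coe_cast]
  omega

lemma chain'_map_of_mem {L : List (Finset α)} {f : Finset α → Finset α}
    (hc : List.IsChain (· ⊂ ·) L)
    (h : ∀ a ∈ L, ∀ b ∈ L, a ⊂ b → f a ⊂ f b) :
    List.IsChain (· ⊂ ·) (L.map f) := by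
  induction L with
  | nil => simp
  | cons x t ih =>
    cases t with
    | nil => simp
    | cons y t' =>
      rw [List.isChain_cons_cons] at hc
      rw [List.map_cons, List.map_cons, List.isChain_cons_cons]
      refine ⟨h x (by simp) y (by simp) hc.1, ?_⟩
      rw [← List.map_cons]
      exact ih hc.2 (fun a ha b hb hab =>
        h a (List.mem_cons_of_mem _ ha) b (List.mem_cons_of_mem _ hb) hab)

lemma union_ssubset_left {X₁ X₂ a b e : Finset α} (hd : Disjoint X₁ X₂)
    (hb : b ⊆ X₁) (he : e ⊆ X₂) (hab : a ⊂ b) : a ∪ e ⊂ b ∪ e := by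
  rw [Finset.ssubset_iff_subset_ne]
  refine ⟨Finset.union_subset_union_left hab.subset, fun hEq => hab.ne ?_⟩
  apply Finset.Subset.antisymm hab.subset
  intro x hx
  have : x ∈ a ∪ e := hEq ▸ Finset.mem_union_left _ hx
  rcases Finset.mem_union.mp this with h | h
  · exact h
  · exact absurd (he h) (Finset.disjoint_left.mp hd (hb hx))

lemma union_ssubset_right {X₁ X₂ a b e : Finset α} (hd : Disjoint X₁ X₂)
    (hb : b ⊆ X₂) (he : e ⊆ X₁) (hab : a ⊂ b) : e ∪ a ⊂ e ∪ b := by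
  rw [Finset.ssubset_iff_subset_ne]
  refine ⟨Finset.union_subset_union_right hab.subset, fun hEq => hab.ne ?_⟩
  apply Finset.Subset.antisymm hab.subset
  intro x hx
  have : x ∈ e ∪ a := hEq ▸ Finset.mem_union_right _ hx
  rcases Finset.mem_union.mp this with h | h
  · exact absurd (he h) (Finset.disjoint_left.mp hd.symm (hb hx))
  · exact h

lemma mem_of_getLast? {L : List (Finset α)} {x : Finset α} (h : x ∈ L.getLast?) : x ∈ L := by
  obtain ⟨hne, rfl⟩ := List.mem_getLast?_eq_getLast h
  exact List.getLast_mem hne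

end Helpers
section Main

open Finset in
lemma percoord {X : Finset α} {F : Finset (Finset α)} {k : ℕ} {H : Finset α}
    (hF : IsSatSperner X F k) (hHX : H ⊆ X) (hcard : 2 ≤ H.card)
    (hsl : ∀ S ∈ F, S ∩ H = ∅ ∨ H ⊆ S) (he : ∅ ∈ F) (hx : X ∈ F)
    {A : Finset α} (hA : A ⊆ X) :
    ∃ Ds Dl : List (Finset α), Ds ≠ [] ∧ Dl ≠ [] ∧
      List.IsChain (· ⊂ ·) Ds ∧ List.IsChain (· ⊂ ·) Dl ∧
      (∀ s ∈ Ds, s ∈ F ∧ s ∩ H = ∅ ∧ s ⊆ A) ∧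
      (∀ s ∈ Dl, s ∈ F ∧ H ⊆ s ∧ A ⊆ s) ∧
      k ≤ Ds.length + Dl.length := by
  obtain ⟨h, hh⟩ : ∃ h, h ∈ H := (card_pos.mp (by omega)).exists_mem
  set Z : Finset α := (A \ H) ∪ H.erase h with hZdef
  have hZX : Z ⊆ X := union_subset ((sdiff_subset).trans hA) ((erase_subset _ _).trans hHX)
  have hZH : Z ∩ H = H.erase h := by
    rw [hZdef, union_inter_distrib_right, sdiff_inter_self,
      inter_eq_left.mpr (erase_subset _ _), empty_union]
  have herase_ne : H.erase h ≠ ∅ := by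
    have : 1 ≤ (H.erase h).card := by rw [card_erase_of_mem hh]; omega
    exact (card_pos.mp this).ne_empty
  have hhZ : h ∉ Z := by
    simp only [hZdef, mem_union, mem_sdiff, mem_erase]
    push_neg
    exact ⟨fun _ => hh, fun hc => absurd rfl hc⟩
  have hZnl : ¬ H ⊆ Z := fun hc => hhZ (hc hh)
  have hZF : Z ∉ F := by
    intro hc
    rcases hsl Z hc with h' | h'
    · rw [hZH] at h'; exact herase_ne h'
    · exact hZnl h'
  obtain ⟨C, hC, hmem⟩ := hF.2.2 Z hZX hZF
  have ht : ∃ t, C t = Z := by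
    by_contra hc
    push_neg at hc
    exact hF.2.1 ⟨C, hC, fun i => (Finset.mem_insert.mp (hmem i)).resolve_left (hc i)⟩
  obtain ⟨t, ht⟩ := ht
  have htk : t.1 ≤ k := by omega
  -- the small chain below Z
  set f : Fin t.1 → Finset α := fun i => C ⟨i.1, by omega⟩ with hfdef
  have hfZ : ∀ i, f i ⊂ Z := by
    intro i; rw [← ht]; exact hC (by simp [Fin.lt_def])
  have hfF : ∀ i, f i ∈ F := fun i =>
    (Finset.mem_insert.mp (hmem _)).resolve_left (fun hc => (hfZ i).ne hc)
  have hfsmall : ∀ i, f i ∩ H = ∅ := by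
    intro i
    rcases hsl _ (hfF i) with h' | h'
    · exact h'
    · exact absurd (h'.trans (hfZ i).subset) hZnl
  have hfA : ∀ i, f i ⊆ A := by
    intro i x hxf
    have hxZ : x ∈ Z := (hfZ i).subset hxf
    rcases mem_union.mp hxZ with h' | h'
    · exact (mem_sdiff.mp h').1
    · exact absurd (mem_inter.mpr ⟨hxf, (erase_subset _ _) h'⟩) (by rw [hfsmall i]; simp)
  -- the large chain above Z
  set g : Fin (k - t.1) → Finset α := fun i => C ⟨t.1 + 1 + i.1, by omega⟩ with hgdef
  have hgZ : ∀ i, Z ⊂ g i := by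
    intro i; rw [← ht]; exact hC (by simp [Fin.lt_def]; omega)
  have hgF : ∀ i, g i ∈ F := fun i =>
    (Finset.mem_insert.mp (hmem _)).resolve_left (fun hc => (hgZ i).ne hc.symm)
  have hglarge : ∀ i, H ⊆ g i := by
    intro i
    rcases hsl _ (hgF i) with h' | h'
    · exfalso
      apply herase_ne
      have : H.erase h ⊆ g i ∩ H := by
        intro x hx
        exact mem_inter.mpr ⟨(hgZ i).subset (mem_union_right _ hx), (erase_subset _ _) hx⟩
      rw [h'] at this
      exact subset_empty.mp this
    · exact h'
  have hgA : ∀ i, A ⊆ g i := by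
    intro i x hxA
    by_cases hxH : x ∈ H
    · exact hglarge i hxH
    · exact (hgZ i).subset (mem_union_left _ (mem_sdiff.mpr ⟨hxA, hxH⟩))
  -- assemble
  have hDs0c : List.IsChain (· ⊂ ·) (List.ofFn f) := by
    apply chain'_ofFn
    intro i j hij
    exact hC (Fin.mk_lt_mk.mpr hij)
  have hDl0c : List.IsChain (· ⊂ ·) (List.ofFn g) := by
    apply chain'_ofFn
    intro i j hij
    have : i.1 < j.1 := hij
    exact hC (Fin.mk_lt_mk.mpr (by omega))
  have hDs0m : ∀ s ∈ List.ofFn f, s ∈ F ∧ s ∩ H = ∅ ∧ s ⊆ A := by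
    intro s hs
    obtain ⟨i, rfl⟩ := List.mem_ofFn.mp hs
    exact ⟨hfF i, hfsmall i, hfA i⟩
  have hDl0m : ∀ s ∈ List.ofFn g, s ∈ F ∧ H ⊆ s ∧ A ⊆ s := by
    intro s hs
    obtain ⟨i, rfl⟩ := List.mem_ofFn.mp hs
    exact ⟨hgF i, hglarge i, hgA i⟩
  have hsing_s : ∀ s ∈ [(∅ : Finset α)], s ∈ F ∧ s ∩ H = ∅ ∧ s ⊆ A := by
    intro s hs
    simp only [List.mem_singleton] at hs
    subst hs
    exact ⟨he, by simp, by simp⟩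
  have hsing_l : ∀ s ∈ [X], s ∈ F ∧ H ⊆ s ∧ A ⊆ s := by
    intro s hs
    simp only [List.mem_singleton] at hs
    subst hs
    exact ⟨hx, hHX, hA⟩
  by_cases ht0 : t.1 = 0
  · by_cases htk' : t.1 = k
    · exact ⟨[∅], [X], by simp, by simp, by simp, by simp, hsing_s, hsing_l, by simp; omega⟩
    · refine ⟨[∅], List.ofFn g, by simp, ?_, by simp, hDl0c, hsing_s, hDl0m, ?_⟩
      · simp only [ne_eq, List.ofFn_eq_nil_iff]; omega
      · simp only [List.length_ofFn, List.length_singleton]; omega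
  · by_cases htk' : t.1 = k
    · refine ⟨List.ofFn f, [X], ?_, by simp, hDs0c, by simp, hDs0m, hsing_l, ?_⟩
      · simp only [ne_eq, List.ofFn_eq_nil_iff]; omega
      · simp only [List.length_ofFn, List.length_singleton]; omega
    · refine ⟨List.ofFn f, List.ofFn g, ?_, ?_, hDs0c, hDl0c, hDs0m, hDl0m, ?_⟩
      · simp only [ne_eq, List.ofFn_eq_nil_iff]; omega
      · simp only [ne_eq, List.ofFn_eq_nil_iff]; omega
      · simp only [List.length_ofFn]; omega

end Main
section Split

open Finset in
lemma extend_front {D : List (Finset α)} (hne : D ≠ [])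
    (hc : List.IsChain (· ⊂ ·) D) (u v : Finset α)
    (hDh : D.head? = some v) (huv : u ⊆ v) :
    ∃ D' : List (Finset α), D' ≠ [] ∧ List.IsChain (· ⊂ ·) D' ∧
      D'.head? = some u ∧ D'.getLast? = D.getLast? ∧
      (∀ x ∈ D', x = u ∨ x ∈ D) ∧ D.length ≤ D'.length ∧
      (u ≠ v → D.length + 1 ≤ D'.length) := by
  by_cases hEq : u = v
  · exact ⟨D, hne, hc, by rw [hDh, hEq], rfl, fun x hx => Or.inr hx,
      le_refl _, fun hc' => absurd hEq hc'⟩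
  · refine ⟨u :: D, by simp, ?_, by simp, ?_, ?_, by simp, fun _ => by simp⟩
    · rw [List.isChain_cons]
      refine ⟨?_, hc⟩
      intro y hy
      rw [hDh] at hy
      simp only [Option.mem_def, Option.some.injEq] at hy
      subst hy
      exact huv.ssubset_of_ne hEq
    · obtain ⟨d, D₂, rfl⟩ := List.exists_cons_of_ne_nil hne
      rw [List.getLast?_cons_cons]
    · intro x hx
      rcases List.mem_cons.mp hx with h | h
      · exact Or.inl h
      · exact Or.inr h

open Finset in
lemma listSplit {X₁ X₂ : Finset α} (hd : Disjoint X₁ X₂) :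
    ∀ L : List (Finset α), List.IsChain (· ⊂ ·) L → (∀ c ∈ L, c ⊆ X₁ ∪ X₂) → L ≠ [] →
    ∃ D E : List (Finset α), D ≠ [] ∧ E ≠ [] ∧
      List.IsChain (· ⊂ ·) D ∧ List.IsChain (· ⊂ ·) E ∧
      (∀ x ∈ D, ∃ c ∈ L, x = c ∩ X₁) ∧ (∀ y ∈ E, ∃ c ∈ L, y = c ∩ X₂) ∧
      D.head? = L.head?.map (· ∩ X₁) ∧ E.head? = L.head?.map (· ∩ X₂) ∧
      D.getLast? = L.getLast?.map (· ∩ X₁) ∧ E.getLast? = L.getLast?.map (· ∩ X₂) ∧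
      L.length + 1 ≤ D.length + E.length := by
  intro L
  induction L with
  | nil => intro _ _ h; exact absurd rfl h
  | cons x t ih =>
    intro hc hsub _
    cases t with
    | nil =>
      exact ⟨[x ∩ X₁], [x ∩ X₂], by simp, by simp, by simp, by simp,
        by simp, by simp, rfl, rfl, rfl, rfl, by simp⟩
    | cons y t' =>
      have hxy : x ⊂ y := (List.isChain_cons_cons.mp hc).1
      obtain ⟨D, E, hDne, hEne, hcD, hcE, hmD, hmE, hhD, hhE, hlD, hlE, hlen⟩ :=
        ih (List.isChain_cons_cons.mp hc).2 (fun c hc' => hsub c (List.mem_cons_of_mem _ hc'))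
          (by simp)
      have hDh : D.head? = some (y ∩ X₁) := by rw [hhD]; rfl
      have hEh : E.head? = some (y ∩ X₂) := by rw [hhE]; rfl
      obtain ⟨D', hD'ne, hcD', hhD', hlD', hmD', hlenD, hlenD'⟩ :=
        extend_front hDne hcD (x ∩ X₁) (y ∩ X₁) hDh
          (inter_subset_inter hxy.subset (Finset.Subset.refl _))
      obtain ⟨E', hE'ne, hcE', hhE', hlE', hmE', hlenE, hlenE'⟩ :=
        extend_front hEne hcE (x ∩ X₂) (y ∩ X₂) hEh
          (inter_subset_inter hxy.subset (Finset.Subset.refl _))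
      have hne2 : x ∩ X₁ ≠ y ∩ X₁ ∨ x ∩ X₂ ≠ y ∩ X₂ := by
        by_contra hb
        push_neg at hb
        apply hxy.ne
        have hx' : x = x ∩ X₁ ∪ x ∩ X₂ := by
          rw [← inter_union_distrib_left, inter_eq_left.mpr (hsub x (by simp))]
        have hy' : y = y ∩ X₁ ∪ y ∩ X₂ := by
          rw [← inter_union_distrib_left, inter_eq_left.mpr (hsub y (by simp))]
        rw [hx', hy', hb.1, hb.2]
      refine ⟨D', E', hD'ne, hE'ne, hcD', hcE', ?_, ?_, by rw [hhD']; rfl, by rw [hhE']; rfl,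
        ?_, ?_, ?_⟩
      · intro z hz
        rcases hmD' z hz with h | h
        · exact ⟨x, by simp, h⟩
        · obtain ⟨c, hc1, hc2⟩ := hmD z h
          exact ⟨c, List.mem_cons_of_mem _ hc1, hc2⟩
      · intro z hz
        rcases hmE' z hz with h | h
        · exact ⟨x, by simp, h⟩
        · obtain ⟨c, hc1, hc2⟩ := hmE z h
          exact ⟨c, List.mem_cons_of_mem _ hc1, hc2⟩
      · rw [hlD', hlD, List.getLast?_cons_cons]
      · rw [hlE', hlE, List.getLast?_cons_cons]
      · simp only [List.length_cons] at hlen ⊢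
        rcases hne2 with h | h
        · have := hlenD' h; omega
        · have := hlenE' h; omega

open Finset in
lemma prodPath {X₁ X₂ : Finset α} (hd : Disjoint X₁ X₂) (P Q : List (Finset α))
    (hPne : P ≠ []) (hQne : Q ≠ [])
    (hPc : List.IsChain (· ⊂ ·) P) (hQc : List.IsChain (· ⊂ ·) Q)
    (hP1 : ∀ x ∈ P, x ⊆ X₁) (hQ2 : ∀ y ∈ Q, y ⊆ X₂) :
    ∃ L : List (Finset α), L ≠ [] ∧ List.IsChain (· ⊂ ·) L ∧
      (∀ z ∈ L, ∃ x ∈ P, ∃ y ∈ Q, z = x ∪ y) ∧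
      L.length + 1 = P.length + Q.length := by
  obtain ⟨y₀, Q', rfl⟩ := List.exists_cons_of_ne_nil hQne
  have hy₀ : y₀ ⊆ X₂ := hQ2 y₀ (by simp)
  set d : Finset α := P.getLast hPne with hddef
  have hdP : d ∈ P := List.getLast_mem hPne
  refine ⟨P.map (· ∪ y₀) ++ Q'.map (d ∪ ·), ?_, ?_, ?_, ?_⟩
  · simp [hPne]
  · rw [List.isChain_append]
    refine ⟨?_, ?_, ?_⟩
    · exact chain'_map_of_mem hPc (fun a ha b hb hab =>
        union_ssubset_left hd (hP1 b hb) hy₀ hab)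
    · apply chain'_map_of_mem (hQc.tail)
      intro a ha b hb hab
      exact union_ssubset_right hd (hQ2 b (List.mem_cons_of_mem _ hb)) (hP1 d hdP) hab
    · intro w hw z hz
      rw [List.getLast?_map, List.getLast?_eq_getLast hPne] at hw
      simp only [Option.map_some, Option.mem_def, Option.some.injEq] at hw
      subst hw
      cases Q' with
      | nil => simp at hz
      | cons y₁ Q'' =>
        simp only [List.map_cons, List.head?_cons, Option.mem_def, Option.some.injEq] at hz
        subst hz
        have hy01 : y₀ ⊂ y₁ := (List.isChain_cons_cons.mp hQc).1
        exact union_ssubset_right hd (hQ2 y₁ (by simp)) (hP1 d hdP) hy01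
  · intro z hz
    rcases List.mem_append.mp hz with h | h
    · obtain ⟨x, hx1, rfl⟩ := List.mem_map.mp h
      exact ⟨x, hx1, y₀, by simp, rfl⟩
    · obtain ⟨y, hy1, rfl⟩ := List.mem_map.mp h
      exact ⟨d, hdP, y, List.mem_cons_of_mem _ hy1, rfl⟩
  · simp only [List.length_append, List.length_map, List.length_cons]
    omega

end Split
section Combine

open Finset in
lemma mem_combine_small {H₁ H₂ : Finset α} {F₁ F₂ : Finset (Finset α)} {d e : Finset α}
    (hd : d ∈ F₁) (hd' : d ∩ H₁ = ∅) (he : e ∈ F₂) (he' : e ∩ H₂ = ∅) :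
    d ∪ e ∈ combineSys H₁ H₂ F₁ F₂ :=
  mem_union_left _ (mem_image.mpr ⟨(d, e), mem_product.mpr
    ⟨mem_filter.mpr ⟨hd, hd'⟩, mem_filter.mpr ⟨he, he'⟩⟩, rfl⟩)

open Finset in
lemma mem_combine_large {H₁ H₂ : Finset α} {F₁ F₂ : Finset (Finset α)} {d e : Finset α}
    (hd : d ∈ F₁) (hd' : H₁ ⊆ d) (he : e ∈ F₂) (he' : H₂ ⊆ e) :
    d ∪ e ∈ combineSys H₁ H₂ F₁ F₂ :=
  mem_union_right _ (mem_image.mpr ⟨(d, e), mem_product.mpr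
    ⟨mem_filter.mpr ⟨hd, hd'⟩, mem_filter.mpr ⟨he, he'⟩⟩, rfl⟩)

open Finset in
lemma combine_cases {H₁ H₂ : Finset α} {F₁ F₂ : Finset (Finset α)} {c : Finset α}
    (hc : c ∈ combineSys H₁ H₂ F₁ F₂) :
    ∃ d e, c = d ∪ e ∧ d ∈ F₁ ∧ e ∈ F₂ ∧
      ((d ∩ H₁ = ∅ ∧ e ∩ H₂ = ∅) ∨ (H₁ ⊆ d ∧ H₂ ⊆ e)) := by
  rcases mem_union.mp hc with h | h
  · obtain ⟨p, hp, rfl⟩ := mem_image.mp h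
    obtain ⟨h1, h2⟩ := mem_product.mp hp
    have h1' := mem_filter.mp h1
    have h2' := mem_filter.mp h2
    exact ⟨p.1, p.2, rfl, h1'.1, h2'.1, Or.inl ⟨h1'.2, h2'.2⟩⟩
  · obtain ⟨p, hp, rfl⟩ := mem_image.mp h
    obtain ⟨h1, h2⟩ := mem_product.mp hp
    have h1' := mem_filter.mp h1
    have h2' := mem_filter.mp h2
    exact ⟨p.1, p.2, rfl, h1'.1, h2'.1, Or.inr ⟨h1'.2, h2'.2⟩⟩

end Combine
theorem stmt_7 (X₁ X₂ : Finset α) (hdisj : Disjoint X₁ X₂)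
    (F₁ F₂ : Finset (Finset α)) (k₁ k₂ : ℕ) (H₁ H₂ : Finset α)
    (h1 : IsSatSperner X₁ F₁ k₁) (h2 : IsSatSperner X₂ F₂ k₂)
    (he1 : ∅ ∈ F₁) (he2 : ∅ ∈ F₂) (hx1 : X₁ ∈ F₁) (hx2 : X₂ ∈ F₂)
    (hH1 : IsHomog X₁ F₁ H₁) (hH2 : IsHomog X₂ F₂ H₂)
    (hsl1 : ∀ S ∈ F₁, S ∩ H₁ = ∅ ∨ H₁ ⊆ S) (hsl2 : ∀ S ∈ F₂, S ∩ H₂ = ∅ ∨ H₂ ⊆ S) :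
    IsSatSperner (X₁ ∪ X₂) (combineSys H₁ H₂ F₁ F₂) (k₁ + k₂ - 2) ∧
      ∅ ∈ combineSys H₁ H₂ F₁ F₂ ∧ X₁ ∪ X₂ ∈ combineSys H₁ H₂ F₁ F₂ ∧
      IsHomog (X₁ ∪ X₂) (combineSys H₁ H₂ F₁ F₂) (H₁ ∪ H₂) := by
  obtain ⟨hF1X, hF1nc, hF1sat⟩ := h1
  obtain ⟨hF2X, hF2nc, hF2sat⟩ := h2
  obtain ⟨hH1X, hH1card, hH1atom, hH1max⟩ := hH1
  obtain ⟨hH2X, hH2card, hH2atom, hH2max⟩ := hH2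
  set G := combineSys H₁ H₂ F₁ F₂ with hGdef
  have hH1ne : H₁.Nonempty := card_pos.mp (by omega)
  have hH2ne : H₂.Nonempty := card_pos.mp (by omega)
  have hnotH1 : ∀ a : Finset α, a ∩ H₁ = ∅ → ¬ H₁ ⊆ a := by
    intro a h hsub
    obtain ⟨x, hx⟩ := hH1ne
    have : x ∈ a ∩ H₁ := mem_inter.mpr ⟨hsub hx, hx⟩
    rw [h] at this
    exact notMem_empty x this
  have hnotH2 : ∀ a : Finset α, a ∩ H₂ = ∅ → ¬ H₂ ⊆ a := by
    intro a h hsub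
    obtain ⟨x, hx⟩ := hH2ne
    have : x ∈ a ∩ H₂ := mem_inter.mpr ⟨hsub hx, hx⟩
    rw [h] at this
    exact notMem_empty x this
  -- k₁, k₂ ≥ 2
  have hk1 : 2 ≤ k₁ := by
    by_contra hk
    push_neg at hk
    apply hF1nc
    apply hasChain_mono (show k₁ + 1 ≤ 2 by omega)
    have hc : List.IsChain (· ⊂ ·) [∅, X₁] :=
      List.isChain_cons_cons.mpr ⟨empty_ssubset.mpr (hH1ne.mono hH1X), List.isChain_singleton _⟩
    have hm : ∀ x ∈ [(∅ : Finset α), X₁], x ∈ F₁ := by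
      intro x hx
      rcases List.mem_cons.mp hx with h | h
      · subst h; exact he1
      · simp only [List.mem_singleton] at h; subst h; exact hx1
    exact hasChain_of_list F₁ [∅, X₁] hc hm
  have hk2 : 2 ≤ k₂ := by
    by_contra hk
    push_neg at hk
    apply hF2nc
    apply hasChain_mono (show k₂ + 1 ≤ 2 by omega)
    have hc : List.IsChain (· ⊂ ·) [∅, X₂] :=
      List.isChain_cons_cons.mpr ⟨empty_ssubset.mpr (hH2ne.mono hH2X), List.isChain_singleton _⟩
    have hm : ∀ x ∈ [(∅ : Finset α), X₂], x ∈ F₂ := by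
      intro x hx
      rcases List.mem_cons.mp hx with h | h
      · subst h; exact he2
      · simp only [List.mem_singleton] at h; subst h; exact hx2
    exact hasChain_of_list F₂ [∅, X₂] hc hm
  -- basic computations
  have hEX1 : ∀ e ∈ F₂, e ∩ X₁ = ∅ := by
    intro e he
    rw [← Finset.disjoint_iff_inter_eq_empty]
    exact Finset.disjoint_left.mpr
      (fun a ha ha1 => Finset.disjoint_left.mp hdisj ha1 (hF2X e he ha))
  have hDX2 : ∀ d ∈ F₁, d ∩ X₂ = ∅ := by
    intro d hd
    rw [← Finset.disjoint_iff_inter_eq_empty]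
    exact Finset.disjoint_left.mpr
      (fun a ha ha2 => Finset.disjoint_left.mp hdisj (hF1X d hd ha) ha2)
  have hcompu : ∀ d ∈ F₁, ∀ e ∈ F₂, (d ∪ e) ∩ X₁ = d ∧ (d ∪ e) ∩ X₂ = e := by
    intro d hd e he
    constructor
    · rw [union_inter_distrib_right, inter_eq_left.mpr (hF1X d hd), hEX1 e he, union_empty]
    · rw [union_inter_distrib_right, inter_eq_left.mpr (hF2X e he), hDX2 d hd, empty_union]
  have hstruct : ∀ c ∈ G, (c ∩ X₁ ∈ F₁) ∧ (c ∩ X₂ ∈ F₂) ∧ c = (c ∩ X₁) ∪ (c ∩ X₂) ∧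
      ((c ∩ H₁ = ∅ ∧ c ∩ H₂ = ∅) ∨ (H₁ ⊆ c ∩ X₁ ∧ H₂ ⊆ c ∩ X₂)) := by
    intro c hcG
    obtain ⟨d, e, rfl, hd, he, hde⟩ := combine_cases hcG
    obtain ⟨e1, e2⟩ := hcompu d hd e he
    rw [e1, e2]
    refine ⟨hd, he, rfl, ?_⟩
    rcases hde with ⟨hs1, hs2⟩ | ⟨hl1, hl2⟩
    · left
      constructor
      · rw [union_inter_distrib_right, hs1, empty_union, ← Finset.subset_empty]
        rw [← hEX1 e he]
        exact inter_subset_inter (Finset.Subset.refl _) hH1X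
      · rw [union_inter_distrib_right, hs2, union_empty, ← Finset.subset_empty]
        rw [← hDX2 d hd]
        exact inter_subset_inter (Finset.Subset.refl _) hH2X
    · right
      exact ⟨hl1, hl2⟩
  have hGsub : ∀ c ∈ G, c ⊆ X₁ ∪ X₂ := by
    intro c hcG
    obtain ⟨d, e, rfl, hd, he, _⟩ := combine_cases hcG
    exact union_subset_union (hF1X d hd) (hF2X e he)
  -- no long chain in G
  have hnc : ¬ HasChain G (k₁ + k₂ - 2 + 1) := by
    rintro ⟨C, hC, hmem⟩
    set M := List.ofFn C with hM
    have hMc : List.IsChain (· ⊂ ·) M := chain'_ofFn C (fun i j h => hC h)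
    have hMm : ∀ c ∈ M, c ∈ G := by
      intro c hcM
      obtain ⟨i, rfl⟩ := List.mem_ofFn.mp hcM
      exact hmem i
    have hMlen : M.length = k₁ + k₂ - 2 + 1 := List.length_ofFn (f := C)
    have hMp : List.Pairwise (· ⊂ ·) M := List.isChain_iff_pairwise.mp hMc
    set p : Finset α → Bool := fun c => decide (c ∩ H₁ = ∅) with hp
    set Ms := M.filter p with hMs0
    set Ml := M.filter (fun c => ! p c) with hMl0
    have hlen2 : M.length = Ms.length + Ml.length := List.length_eq_length_filter_add p
    have hMsP : ∀ c ∈ Ms, c ∈ M ∧ c ∈ G ∧ c ∩ H₁ = ∅ ∧ c ∩ H₂ = ∅ := by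
      intro c hc
      obtain ⟨hcM, hcp⟩ := List.mem_filter.mp hc
      have hcH1 : c ∩ H₁ = ∅ := by rwa [hp, decide_eq_true_eq] at hcp
      have hcG := hMm c hcM
      refine ⟨hcM, hcG, hcH1, ?_⟩
      rcases (hstruct c hcG).2.2.2 with h | h
      · exact h.2
      · exact absurd (h.1.trans inter_subset_left) (hnotH1 c hcH1)
    have hMlP : ∀ c ∈ Ml, c ∈ M ∧ c ∈ G ∧ H₁ ⊆ c ∩ X₁ ∧ H₂ ⊆ c ∩ X₂ := by
      intro c hc
      obtain ⟨hcM, hcp⟩ := List.mem_filter.mp hc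
      have hcH1 : ¬ (c ∩ H₁ = ∅) := by
        intro h
        rw [hp] at hcp
        simp [h] at hcp
      have hcG := hMm c hcM
      refine ⟨hcM, hcG, ?_⟩
      rcases (hstruct c hcG).2.2.2 with h | h
      · exact absurd h.1 hcH1
      · exact h
    have hcmp : ∀ a ∈ M, ∀ b ∈ M, a ≠ b → a ⊂ b ∨ b ⊂ a :=
      by
        have : Std.Symm (fun a b : Finset α => a ⊂ b ∨ b ⊂ a) := ⟨fun a b h => h.symm⟩
        exact (hMp.imp (fun h => Or.inl h)).forall
    have hsl_lt : ∀ a ∈ Ms, ∀ b ∈ Ml, a ⊂ b := by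
      intro a ha b hb
      obtain ⟨haM, _, ha1, _⟩ := hMsP a ha
      obtain ⟨hbM, _, hb1, _⟩ := hMlP b hb
      have hH1b : H₁ ⊆ b := hb1.trans inter_subset_left
      have hab : a ≠ b := fun hEq => hnotH1 a ha1 (hEq ▸ hH1b)
      rcases hcmp a haM b hbM hab with h | h
      · exact h
      · exact absurd (hH1b.trans h.subset) (hnotH1 a ha1)
    -- the small side lists
    have hSide : ∃ Ds' Es' : List (Finset α), Ds' ≠ [] ∧ Es' ≠ [] ∧
        List.IsChain (· ⊂ ·) Ds' ∧ List.IsChain (· ⊂ ·) Es' ∧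
        (∀ x ∈ Ds', (x ∈ F₁ ∧ x ∩ H₁ = ∅) ∧ (x = ∅ ∨ ∃ c ∈ Ms, x = c ∩ X₁)) ∧
        (∀ y ∈ Es', (y ∈ F₂ ∧ y ∩ H₂ = ∅) ∧ (y = ∅ ∨ ∃ c ∈ Ms, y = c ∩ X₂)) ∧
        Ms.length + 1 ≤ Ds'.length + Es'.length := by
      by_cases hMsE : Ms = []
      · refine ⟨[∅], [∅], by simp, by simp, by simp, by simp, ?_, ?_, by simp [hMsE]⟩
        · intro x hx
          simp only [List.mem_singleton] at hx
          subst hx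
          exact ⟨⟨he1, by simp⟩, Or.inl rfl⟩
        · intro y hy
          simp only [List.mem_singleton] at hy
          subst hy
          exact ⟨⟨he2, by simp⟩, Or.inl rfl⟩
      · obtain ⟨D, E, hDne, hEne, hcD, hcE, hmD, hmE, _, _, _, _, hlenDE⟩ :=
          listSplit hdisj Ms ((List.Pairwise.sublist List.filter_sublist hMp).isChain)
            (fun c hc => hGsub c (hMsP c hc).2.1) hMsE
        refine ⟨D, E, hDne, hEne, hcD, hcE, ?_, ?_, hlenDE⟩
        · intro x hx
          obtain ⟨c, hcMs, rfl⟩ := hmD x hx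
          obtain ⟨_, hcG, hcH1, _⟩ := hMsP c hcMs
          refine ⟨⟨(hstruct c hcG).1, ?_⟩, Or.inr ⟨c, hcMs, rfl⟩⟩
          rw [inter_assoc, inter_eq_right.mpr hH1X]
          exact hcH1
        · intro y hy
          obtain ⟨c, hcMs, rfl⟩ := hmE y hy
          obtain ⟨_, hcG, _, hcH2⟩ := hMsP c hcMs
          refine ⟨⟨(hstruct c hcG).2.1, ?_⟩, Or.inr ⟨c, hcMs, rfl⟩⟩
          rw [inter_assoc, inter_eq_right.mpr hH2X]
          exact hcH2
    -- the large side lists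
    have hSide2 : ∃ Dl' El' : List (Finset α), Dl' ≠ [] ∧ El' ≠ [] ∧
        List.IsChain (· ⊂ ·) Dl' ∧ List.IsChain (· ⊂ ·) El' ∧
        (∀ x ∈ Dl', (x ∈ F₁ ∧ H₁ ⊆ x) ∧ (x = X₁ ∨ ∃ c ∈ Ml, x = c ∩ X₁)) ∧
        (∀ y ∈ El', (y ∈ F₂ ∧ H₂ ⊆ y) ∧ (y = X₂ ∨ ∃ c ∈ Ml, y = c ∩ X₂)) ∧
        Ml.length + 1 ≤ Dl'.length + El'.length := by
      by_cases hMlE : Ml = []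
      · refine ⟨[X₁], [X₂], by simp, by simp, by simp, by simp, ?_, ?_, by simp [hMlE]⟩
        · intro x hx
          simp only [List.mem_singleton] at hx
          subst hx
          exact ⟨⟨hx1, hH1X⟩, Or.inl rfl⟩
        · intro y hy
          simp only [List.mem_singleton] at hy
          subst hy
          exact ⟨⟨hx2, hH2X⟩, Or.inl rfl⟩
      · obtain ⟨D, E, hDne, hEne, hcD, hcE, hmD, hmE, _, _, _, _, hlenDE⟩ :=
          listSplit hdisj Ml ((List.Pairwise.sublist List.filter_sublist hMp).isChain)
            (fun c hc => hGsub c (hMlP c hc).2.1) hMlE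
        refine ⟨D, E, hDne, hEne, hcD, hcE, ?_, ?_, hlenDE⟩
        · intro x hx
          obtain ⟨c, hcMl, rfl⟩ := hmD x hx
          obtain ⟨_, hcG, hcH1, _⟩ := hMlP c hcMl
          exact ⟨⟨(hstruct c hcG).1, hcH1⟩, Or.inr ⟨c, hcMl, rfl⟩⟩
        · intro y hy
          obtain ⟨c, hcMl, rfl⟩ := hmE y hy
          obtain ⟨_, hcG, _, hcH2⟩ := hMlP c hcMl
          exact ⟨⟨(hstruct c hcG).2.1, hcH2⟩, Or.inr ⟨c, hcMl, rfl⟩⟩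
    obtain ⟨Ds', Es', hDs'ne, hEs'ne, hcDs', hcEs', hmDs', hmEs', hlenS⟩ := hSide
    obtain ⟨Dl', El', hDl'ne, hEl'ne, hcDl', hcEl', hmDl', hmEl', hlenL⟩ := hSide2
    -- junction facts
    have hjunc1 : ∀ w ∈ Ds', ∀ z ∈ Dl', w ⊂ z := by
      intro w hw z hz
      obtain ⟨⟨hwF, hwH⟩, hwform⟩ := hmDs' w hw
      obtain ⟨⟨hzF, hzH⟩, hzform⟩ := hmDl' z hz
      have hsub : w ⊆ z := by
        rcases hwform with rfl | ⟨c, hcMs, rfl⟩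
        · exact empty_subset _
        · rcases hzform with rfl | ⟨c', hcMl, rfl⟩
          · exact inter_subset_right
          · exact inter_subset_inter (hsl_lt c hcMs c' hcMl).subset (Finset.Subset.refl _)
      exact hsub.ssubset_of_ne (fun hEq => hnotH1 w hwH (hEq ▸ hzH))
    have hjunc2 : ∀ w ∈ Es', ∀ z ∈ El', w ⊂ z := by
      intro w hw z hz
      obtain ⟨⟨hwF, hwH⟩, hwform⟩ := hmEs' w hw
      obtain ⟨⟨hzF, hzH⟩, hzform⟩ := hmEl' z hz
      have hsub : w ⊆ z := by
        rcases hwform with rfl | ⟨c, hcMs, rfl⟩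
        · exact empty_subset _
        · rcases hzform with rfl | ⟨c', hcMl, rfl⟩
          · exact inter_subset_right
          · exact inter_subset_inter (hsl_lt c hcMs c' hcMl).subset (Finset.Subset.refl _)
      exact hsub.ssubset_of_ne (fun hEq => hnotH2 w hwH (hEq ▸ hzH))
    -- chains in F₁ and F₂
    have hchain1 : HasChain F₁ (Ds'.length + Dl'.length) := by
      have hc : List.IsChain (· ⊂ ·) (Ds' ++ Dl') := by
        rw [List.isChain_append]
        exact ⟨hcDs', hcDl', fun w hw z hz =>
          hjunc1 w (mem_of_getLast? hw) z (List.mem_of_mem_head? hz)⟩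
      have := hasChain_of_list F₁ (Ds' ++ Dl') hc (by
        intro x hx
        rcases List.mem_append.mp hx with h | h
        · exact ((hmDs' x h).1).1
        · exact ((hmDl' x h).1).1)
      rwa [List.length_append] at this
    have hchain2 : HasChain F₂ (Es'.length + El'.length) := by
      have hc : List.IsChain (· ⊂ ·) (Es' ++ El') := by
        rw [List.isChain_append]
        exact ⟨hcEs', hcEl', fun w hw z hz =>
          hjunc2 w (mem_of_getLast? hw) z (List.mem_of_mem_head? hz)⟩
      have := hasChain_of_list F₂ (Es' ++ El') hc (by
        intro x hx
        rcases List.mem_append.mp hx with h | h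
        · exact ((hmEs' x h).1).1
        · exact ((hmEl' x h).1).1)
      rwa [List.length_append] at this
    have hb1 : Ds'.length + Dl'.length ≤ k₁ := by
      by_contra hcon
      push_neg at hcon
      exact hF1nc (hasChain_mono (by omega) hchain1)
    have hb2 : Es'.length + El'.length ≤ k₂ := by
      by_contra hcon
      push_neg at hcon
      exact hF2nc (hasChain_mono (by omega) hchain2)
    omega
  -- saturation
  have hsat : ∀ S ⊆ X₁ ∪ X₂, S ∉ G → HasChain (insert S G) (k₁ + k₂ - 2 + 1) := by
    intro S hSX hSG
    have hAB : (S ∩ X₁) ∪ (S ∩ X₂) = S := by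
      rw [← inter_union_distrib_left, inter_eq_left.mpr hSX]
    obtain ⟨Ds₁, Dl₁, hDs₁ne, hDl₁ne, hcDs₁, hcDl₁, hmDs₁, hmDl₁, hlen₁⟩ :=
      percoord ⟨hF1X, hF1nc, hF1sat⟩ hH1X hH1card hsl1 he1 hx1
        (inter_subset_right : S ∩ X₁ ⊆ X₁)
    obtain ⟨Ds₂, Dl₂, hDs₂ne, hDl₂ne, hcDs₂, hcDl₂, hmDs₂, hmDl₂, hlen₂⟩ :=
      percoord ⟨hF2X, hF2nc, hF2sat⟩ hH2X hH2card hsl2 he2 hx2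
        (inter_subset_right : S ∩ X₂ ⊆ X₂)
    obtain ⟨Ls, hLsne, hcLs, hmLs, hlenLs⟩ := prodPath hdisj Ds₁ Ds₂ hDs₁ne hDs₂ne hcDs₁ hcDs₂
      (fun x hx => ((hmDs₁ x hx).2.2).trans inter_subset_right)
      (fun y hy => ((hmDs₂ y hy).2.2).trans inter_subset_right)
    obtain ⟨Ll, hLlne, hcLl, hmLl, hlenLl⟩ := prodPath hdisj Dl₁ Dl₂ hDl₁ne hDl₂ne hcDl₁ hcDl₂
      (fun x hx => hF1X x (hmDl₁ x hx).1)
      (fun y hy => hF2X y (hmDl₂ y hy).1)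
    have hLsmem : ∀ w ∈ Ls, w ∈ G ∧ w ⊂ S := by
      intro w hw
      obtain ⟨x, hx, y, hy, rfl⟩ := hmLs w hw
      obtain ⟨hxF, hxH, hxA⟩ := hmDs₁ x hx
      obtain ⟨hyF, hyH, hyB⟩ := hmDs₂ y hy
      have hwG : x ∪ y ∈ G := mem_combine_small hxF hxH hyF hyH
      refine ⟨hwG, Finset.ssubset_iff_subset_ne.mpr ⟨?_, fun h => hSG (h ▸ hwG)⟩⟩
      rw [← hAB]
      exact union_subset_union hxA hyB
    have hLlmem : ∀ z ∈ Ll, z ∈ G ∧ S ⊂ z := by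
      intro z hz
      obtain ⟨x, hx, y, hy, rfl⟩ := hmLl z hz
      obtain ⟨hxF, hxH, hxA⟩ := hmDl₁ x hx
      obtain ⟨hyF, hyH, hyB⟩ := hmDl₂ y hy
      have hzG : x ∪ y ∈ G := mem_combine_large hxF hxH hyF hyH
      refine ⟨hzG, Finset.ssubset_iff_subset_ne.mpr ⟨?_, fun h => hSG (h ▸ hzG)⟩⟩
      rw [← hAB]
      exact union_subset_union hxA hyB
    have hcfull : List.IsChain (· ⊂ ·) (Ls ++ S :: Ll) := by
      rw [List.isChain_append]
      refine ⟨hcLs, ?_, ?_⟩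
      · exact List.isChain_cons.mpr
          ⟨fun z hz => (hLlmem z (List.mem_of_mem_head? hz)).2, hcLl⟩
      · intro w hw z hz
        simp only [List.head?_cons, Option.mem_def, Option.some.injEq] at hz
        subst hz
        exact (hLsmem w (mem_of_getLast? hw)).2
    have hmfull : ∀ x ∈ Ls ++ S :: Ll, x ∈ insert S G := by
      intro x hx
      rcases List.mem_append.mp hx with h | h
      · exact Finset.mem_insert_of_mem (hLsmem x h).1
      · rcases List.mem_cons.mp h with h' | h'
        · subst h'; exact Finset.mem_insert_self _ _
        · exact Finset.mem_insert_of_mem (hLlmem x h').1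
    have hfull := hasChain_of_list (insert S G) (Ls ++ S :: Ll) hcfull hmfull
    apply hasChain_mono ?_ hfull
    simp only [List.length_append, List.length_cons]
    omega
  -- ∅ and full set
  have hEmpty : ∅ ∈ G := by
    have := mem_combine_small (H₁ := H₁) (H₂ := H₂) he1 (empty_inter H₁) he2 (empty_inter H₂)
    simpa using this
  have hFull : X₁ ∪ X₂ ∈ G := mem_combine_large hx1 hH1X hx2 hH2X
  -- homogeneity
  have hAtom : AtomProp G (H₁ ∪ H₂) := by
    intro c hcG
    rcases (hstruct c hcG).2.2.2 with h | h
    · left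
      rw [inter_union_distrib_left, h.1, h.2, union_empty]
    · right
      exact union_subset (h.1.trans inter_subset_left) (h.2.trans inter_subset_left)
  have hMax : ∀ H' : Finset α, H' ⊆ X₁ ∪ X₂ → H₁ ∪ H₂ ⊆ H' → AtomProp G H' → H' = H₁ ∪ H₂ := by
    intro H' hH'X hHH' hatom
    have hA1 : AtomProp F₁ (H' ∩ X₁) := by
      intro Sf hSf
      rcases hsl1 Sf hSf with hsm | hlg
      · have hSfG : Sf ∈ G := by
          have := mem_combine_small hSf hsm he2 (empty_inter H₂)
          simpa using this
        rcases hatom Sf hSfG with h' | h'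
        · left
          have hsb : Sf ∩ (H' ∩ X₁) ⊆ Sf ∩ H' :=
            inter_subset_inter (Finset.Subset.refl _) inter_subset_left
          rw [h'] at hsb
          exact Finset.subset_empty.mp hsb
        · right
          exact (inter_subset_inter h' (Finset.Subset.refl _)).trans inter_subset_left
      · have hSfG : Sf ∪ X₂ ∈ G := mem_combine_large hSf hlg hx2 hH2X
        rcases hatom _ hSfG with h' | h'
        · left
          have hsb : Sf ∩ (H' ∩ X₁) ⊆ (Sf ∪ X₂) ∩ H' := by
            intro x hx
            simp only [mem_inter, mem_union] at hx ⊢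
            exact ⟨Or.inl hx.1, hx.2.1⟩
          rw [h'] at hsb
          exact Finset.subset_empty.mp hsb
        · right
          intro x hx
          obtain ⟨hxH', hxX1⟩ := mem_inter.mp hx
          rcases mem_union.mp (h' hxH') with h'' | h''
          · exact h''
          · exact absurd h'' (Finset.disjoint_left.mp hdisj hxX1)
    have hA2 : AtomProp F₂ (H' ∩ X₂) := by
      intro Sf hSf
      rcases hsl2 Sf hSf with hsm | hlg
      · have hSfG : Sf ∈ G := by
          have := mem_combine_small he1 (empty_inter H₁) hSf hsm
          simpa using this
        rcases hatom Sf hSfG with h' | h'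
        · left
          have hsb : Sf ∩ (H' ∩ X₂) ⊆ Sf ∩ H' :=
            inter_subset_inter (Finset.Subset.refl _) inter_subset_left
          rw [h'] at hsb
          exact Finset.subset_empty.mp hsb
        · right
          exact (inter_subset_inter h' (Finset.Subset.refl _)).trans inter_subset_left
      · have hSfG : X₁ ∪ Sf ∈ G := mem_combine_large hx1 hH1X hSf hlg
        rcases hatom _ hSfG with h' | h'
        · left
          have hsb : Sf ∩ (H' ∩ X₂) ⊆ (X₁ ∪ Sf) ∩ H' := by
            intro x hx
            simp only [mem_inter, mem_union] at hx ⊢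
            exact ⟨Or.inr hx.1, hx.2.1⟩
          rw [h'] at hsb
          exact Finset.subset_empty.mp hsb
        · right
          intro x hx
          obtain ⟨hxH', hxX2⟩ := mem_inter.mp hx
          rcases mem_union.mp (h' hxH') with h'' | h''
          · exact absurd h'' (Finset.disjoint_left.mp hdisj.symm hxX2)
          · exact h''
    have e1 : H' ∩ X₁ = H₁ :=
      hH1max _ inter_subset_right (subset_inter (subset_union_left.trans hHH') hH1X) hA1
    have e2 : H' ∩ X₂ = H₂ :=
      hH2max _ inter_subset_right (subset_inter (subset_union_right.trans hHH') hH2X) hA2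
    have : H' = H' ∩ (X₁ ∪ X₂) := (inter_eq_left.mpr hH'X).symm
    rw [this, inter_union_distrib_left, e1, e2]
  exact ⟨⟨hGsub, hnc, hsat⟩, hEmpty, hFull,
    union_subset_union hH1X hH2X, le_trans hH1card (card_le_card subset_union_left),
    hAtom, hMax⟩
end

section
/- Let A ⊆ P(X) be a saturated antichain such that every member of A has cardinality between 1 and |X| - k + 2, where k ≥ 2 and |X| is sufficiently large (|X| ≥ 2k suffices), and suppose A has a homogeneous set H. Then |A| ≥ k - 1. -/
open Finset

variable {α : Type*} [DecidableEq α]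

theorem stmt_13 (X : Finset α) (𝒜 : Finset (Finset α)) (k : ℕ) (hk : 2 ≤ k)
    (hX : 2 * k ≤ X.card) (hsat : IsSatAntichain X 𝒜)
    (hcard : ∀ A ∈ 𝒜, 1 ≤ A.card ∧ A.card ≤ X.card - k + 2)
    (H : Finset α) (hH : IsHomog X 𝒜 H) :
    k - 1 ≤ 𝒜.card := by
  obtain ⟨hAX, hanti, hsatur⟩ := hsat
  obtain ⟨hHX, hH2, hatom, hmax⟩ := hH
  obtain ⟨a, ha, b, hb, hab⟩ := Finset.one_lt_card.mp hH2
  -- there is a member of 𝒜 containing H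
  have hAstar : ∃ A ∈ 𝒜, H ⊆ A := by
    by_cases hHA : H ∈ 𝒜
    · exact ⟨H, hHA, subset_rfl⟩
    · obtain ⟨A, hA, hcomp⟩ := hsatur H hHX hHA
      rcases hcomp with h1 | h2
      · exfalso
        rcases hatom A hA with h | h
        · have haA : a ∈ A ∩ H ∨ True := Or.inr trivial
          have hne : A.Nonempty := Finset.card_pos.mp (by have := (hcard A hA).1; omega)
          obtain ⟨x, hx⟩ := hne
          have : x ∈ A ∩ H := Finset.mem_inter.mpr ⟨hx, h1.subset hx⟩
          simp [h] at this
        · exact absurd (h.trans h1.subset) (fun _ => h1.ne (Finset.Subset.antisymm h1.subset h))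
      · exact ⟨A, hA, h2.subset⟩
  obtain ⟨A0, hA0, hHA0⟩ := hAstar
  -- key chain construction
  have key : ∀ j, j ≤ k - 2 → ∃ (𝒮 : Finset (Finset α)) (T : Finset α),
      𝒮 ⊆ 𝒜 ∧ 𝒮.card = j ∧ (∀ B ∈ 𝒮, a ∉ B) ∧
      T ⊆ X ∧ a ∉ T ∧ b ∈ T ∧ X.card - 1 - j ≤ T.card ∧ ∀ B ∈ 𝒮, ¬ B ⊆ T := by
    intro j
    induction j with
    | zero =>
      intro _
      refine ⟨∅, X.erase a, by simp, by simp, by simp, Finset.erase_subset a X,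
        Finset.notMem_erase a X, Finset.mem_erase.mpr ⟨hab.symm, hHX hb⟩, ?_, by simp⟩
      rw [Finset.card_erase_of_mem (hHX ha)]
      omega
    | succ j ih =>
      intro hj
      obtain ⟨𝒮, T, hS1, hS2, hS3, hT1, hT2, hT3, hT4, hST⟩ :=
        ih (le_trans (Nat.le_succ j) hj)
      have hTnot : T ∉ 𝒜 := by
        intro h
        rcases hatom T h with h' | h'
        · have : b ∈ T ∩ H := Finset.mem_inter.mpr ⟨hT3, hb⟩
          simp [h'] at this
        · exact hT2 (h' ha)
      obtain ⟨A, hA, hcomp⟩ := hsatur T hT1 hTnot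
      have hAT : A ⊂ T := by
        rcases hcomp with h | h
        · exact h
        · exfalso
          have h1 : A.card ≤ X.card - k + 2 := (hcard A hA).2
          have h2 : T.card < A.card := Finset.card_lt_card h
          omega
      have haA : a ∉ A := fun h => hT2 (hAT.subset h)
      have hAH : A ∩ H = ∅ := by
        rcases hatom A hA with h | h
        · exact h
        · exact absurd (h ha) haA
      obtain ⟨y, hy⟩ := Finset.card_pos.mp
        (by have := (hcard A hA).1; omega : 0 < A.card)
      have hyT : y ∈ T := hAT.subset hy
      have hyb : y ≠ b := by
        intro h
        have : y ∈ A ∩ H := Finset.mem_inter.mpr ⟨hy, h ▸ hb⟩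
        simp [hAH] at this
      have hAnotS : A ∉ 𝒮 := fun h => hST A h hAT.subset
      refine ⟨insert A 𝒮, T.erase y, ?_, ?_, ?_, ?_, ?_, ?_, ?_, ?_⟩
      · exact Finset.insert_subset hA hS1
      · rw [Finset.card_insert_of_notMem hAnotS, hS2]
      · intro B hB
        rcases Finset.mem_insert.mp hB with h | h
        · exact h ▸ haA
        · exact hS3 B h
      · exact (Finset.erase_subset y T).trans hT1
      · exact fun h => hT2 (Finset.mem_of_mem_erase h)
      · exact Finset.mem_erase.mpr ⟨hyb.symm, hT3⟩
      · rw [Finset.card_erase_of_mem hyT]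
        omega
      · intro B hB hBsub
        rcases Finset.mem_insert.mp hB with h | h
        · exact Finset.notMem_erase y T (hBsub (h ▸ hy))
        · exact hST B h (hBsub.trans (Finset.erase_subset y T))
  obtain ⟨𝒮, T, hS1, hS2, hS3, -, -, -, -, -⟩ := key (k - 2) le_rfl
  have hnot : A0 ∉ 𝒮 := fun h => hS3 A0 h (hHA0 ha)
  have hins : (insert A0 𝒮).card = k - 1 := by
    rw [Finset.card_insert_of_notMem hnot, hS2]
    omega
  calc k - 1 = (insert A0 𝒮).card := hins.symm
    _ ≤ 𝒜.card := Finset.card_le_card (Finset.insert_subset hA0 hS1)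
end

section
/- Let X be a finite set and F ⊆ P(X) an oversaturated k-Sperner system with a homogeneous set H, where |H| ≥ 2. Let x₁ ∈ H and set X₁ = X \ {x₁}. Define F₁ = {S ∈ F : S ∩ H = ∅} ∪ {S \ {x₁} : S ∈ F, H ⊆ S}. Then F₁ ⊆ P(X₁) is an oversaturated k-Sperner system with |F₁| = |F|, and F₁ contains the same number of (k+1)-chains as F. -/
open Finset

variable {α : Type*} [DecidableEq α]

/-- The shrunken system on the ground set `X \ {x₁}`. -/
def shrinkSys (H : Finset α) (x₁ : α) (F : Finset (Finset α)) : Finset (Finset α) :=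
  (F.filter fun S => S ∩ H = ∅) ∪ (F.filter fun S => H ⊆ S).image (fun S => S.erase x₁)


set_option linter.unusedSectionVars false in
lemma chainCount_eq_of_iso (𝒜 ℬ : Finset (Finset α)) (f : Finset α → Finset α) (m : ℕ)
    (hmem : ∀ A ∈ 𝒜, f A ∈ ℬ)
    (hsurj : ∀ B ∈ ℬ, ∃ A ∈ 𝒜, f A = B)
    (hinj : ∀ A ∈ 𝒜, ∀ A' ∈ 𝒜, f A = f A' → A = A')
    (hsub : ∀ A ∈ 𝒜, ∀ A' ∈ 𝒜, (A ⊆ A' ↔ f A ⊆ f A')) :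
    chainCount 𝒜 m = chainCount ℬ m := by
  have hss : ∀ A ∈ 𝒜, ∀ A' ∈ 𝒜, (A ⊂ A' ↔ f A ⊂ f A') := by
    intro A hA A' hA'
    rw [Finset.ssubset_iff_subset_ne, Finset.ssubset_iff_subset_ne, hsub A hA A' hA']
    constructor
    · rintro ⟨h1, h2⟩; exact ⟨h1, fun h => h2 (hinj A hA A' hA' h)⟩
    · rintro ⟨h1, h2⟩; exact ⟨h1, fun h => h2 (by rw [h])⟩
  unfold chainCount
  refine Nat.card_eq_of_bijective
    (fun C => ⟨fun i => f (C.1 i), fun i j hij => (hss _ (C.2.2 i) _ (C.2.2 j)).mp (C.2.1 hij),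
      fun i => hmem _ (C.2.2 i)⟩) ⟨?_, ?_⟩
  · intro C D h
    have h' : ∀ i, f (C.1 i) = f (D.1 i) := fun i => congrFun (congrArg Subtype.val h) i
    exact Subtype.ext (funext fun i => hinj _ (C.2.2 i) _ (D.2.2 i) (h' i))
  · rintro ⟨D, hD, hDm⟩
    choose g hg1 hg2 using fun i => hsurj (D i) (hDm i)
    refine ⟨⟨g, fun i j hij => (hss _ (hg1 i) _ (hg1 j)).mpr ?_, hg1⟩,
      Subtype.ext (funext fun i => hg2 i)⟩
    rw [hg2 i, hg2 j]; exact hD hij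

theorem stmt_15 (X : Finset α) (F : Finset (Finset α)) (k : ℕ)
    (hF : IsOversat X F k) (H : Finset α) (hH : IsHomog X F H)
    (x₁ : α) (hx : x₁ ∈ H) :
    IsOversat (X.erase x₁) (shrinkSys H x₁ F) k ∧
      (shrinkSys H x₁ F).card = F.card ∧
      chainCount (shrinkSys H x₁ F) (k + 1) = chainCount F (k + 1) := by
  obtain ⟨hHX, hHcard, hAtom, -⟩ := hH
  obtain ⟨hFX, hFsat⟩ := hF
  obtain ⟨x₂, hx₂H, hx₂⟩ := Finset.exists_mem_ne (lt_of_lt_of_le one_lt_two hHcard) x₁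
  set φ : Finset α → Finset α := fun S => if H ⊆ S then S.erase x₁ else S with hφdef
  have hnotsub : ∀ A : Finset α, A ∩ H = ∅ → ¬ H ⊆ A := by
    intro A h hHA
    have : x₂ ∈ A ∩ H := mem_inter.mpr ⟨hHA hx₂H, hx₂H⟩
    simp [h] at this
  have hφ1 : ∀ A : Finset α, A ∩ H = ∅ → φ A = A := fun A h => if_neg (hnotsub A h)
  have hφ2 : ∀ A : Finset α, H ⊆ A → φ A = A.erase x₁ := fun A h => if_pos h
  have hnx1 : ∀ A : Finset α, A ∩ H = ∅ → x₁ ∉ A := by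
    intro A h hm
    have : x₁ ∈ A ∩ H := mem_inter.mpr ⟨hm, hx⟩
    simp [h] at this
  have hnx2 : ∀ A : Finset α, A ∩ H = ∅ → x₂ ∉ A := by
    intro A h hm
    have : x₂ ∈ A ∩ H := mem_inter.mpr ⟨hm, hx₂H⟩
    simp [h] at this
  have hsub : ∀ A ∈ F, ∀ B ∈ F, (A ⊆ B ↔ φ A ⊆ φ B) := by
    intro A hA B hB
    rcases hAtom A hA with h1 | h1 <;> rcases hAtom B hB with h2 | h2
    · rw [hφ1 A h1, hφ1 B h2]
    · rw [hφ1 A h1, hφ2 B h2, Finset.subset_erase]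
      exact ⟨fun h => ⟨h, hnx1 A h1⟩, fun h => h.1⟩
    · rw [hφ2 A h1, hφ1 B h2]
      constructor
      · intro h; exact absurd (h (h1 hx₂H)) (hnx2 B h2)
      · intro h; exact absurd (h (mem_erase.mpr ⟨hx₂, h1 hx₂H⟩)) (hnx2 B h2)
    · rw [hφ2 A h1, hφ2 B h2]
      constructor
      · exact fun h => Finset.erase_subset_erase _ h
      · intro h
        have h' := Finset.insert_subset_insert x₁ h
        rwa [Finset.insert_erase (h1 hx), Finset.insert_erase (h2 hx)] at h'
  have hinj : ∀ A ∈ F, ∀ A' ∈ F, φ A = φ A' → A = A' := by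
    intro A hA A' hA' h
    rcases hAtom A hA with h1 | h1 <;> rcases hAtom A' hA' with h2 | h2
    · rwa [hφ1 A h1, hφ1 A' h2] at h
    · rw [hφ1 A h1, hφ2 A' h2] at h
      exact absurd (h ▸ mem_erase.mpr ⟨hx₂, h2 hx₂H⟩) (hnx2 A h1)
    · rw [hφ2 A h1, hφ1 A' h2] at h
      exact absurd (h ▸ mem_erase.mpr ⟨hx₂, h1 hx₂H⟩) (hnx2 A' h2)
    · rw [hφ2 A h1, hφ2 A' h2] at h
      have h' := congrArg (insert x₁) h
      rwa [Finset.insert_erase (h1 hx), Finset.insert_erase (h2 hx)] at h'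
  have hmem : ∀ A ∈ F, φ A ∈ shrinkSys H x₁ F := by
    intro A hA
    unfold shrinkSys
    rcases hAtom A hA with h1 | h1
    · rw [hφ1 A h1]
      exact mem_union_left _ (mem_filter.mpr ⟨hA, h1⟩)
    · rw [hφ2 A h1]
      exact mem_union_right _ (mem_image.mpr ⟨A, mem_filter.mpr ⟨hA, h1⟩, rfl⟩)
  have hsurj : ∀ B ∈ shrinkSys H x₁ F, ∃ A ∈ F, φ A = B := by
    intro B hB
    unfold shrinkSys at hB
    rcases mem_union.mp hB with hB | hB
    · obtain ⟨hBF, hB2⟩ := mem_filter.mp hB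
      exact ⟨B, hBF, hφ1 B hB2⟩
    · obtain ⟨A, hA, rfl⟩ := mem_image.mp hB
      obtain ⟨hAF, hA2⟩ := mem_filter.mp hA
      exact ⟨A, hAF, hφ2 A hA2⟩
  have hcard : (shrinkSys H x₁ F).card = F.card :=
    (Finset.card_bij (fun A _ => φ A) (fun A hA => hmem A hA)
      (fun A hA A' hA' h => hinj A hA A' hA' h)
      (fun B hB => by obtain ⟨A, hA, h⟩ := hsurj B hB; exact ⟨A, hA, h⟩)).symm
  have hcc : chainCount F (k + 1) = chainCount (shrinkSys H x₁ F) (k + 1) :=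
    chainCount_eq_of_iso F _ φ _ hmem hsurj hinj hsub
  refine ⟨⟨?_, ?_⟩, hcard, hcc.symm⟩
  · intro B hB
    obtain ⟨A, hA, rfl⟩ := hsurj B hB
    rcases hAtom A hA with h1 | h1
    · rw [hφ1 A h1]
      exact Finset.subset_erase.mpr ⟨hFX A hA, hnx1 A h1⟩
    · rw [hφ2 A h1]
      exact Finset.erase_subset_erase _ (hFX A hA)
  · intro S hS hSF₁
    have hx₁S : x₁ ∉ S := fun h => (Finset.mem_erase.mp (hS h)).1 rfl
    by_cases hSH : S ∩ H = ∅
    · have hSF : S ∉ F := fun h =>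
        hSF₁ (mem_union_left _ (mem_filter.mpr ⟨h, hSH⟩))
      have hlt := hFsat S (hS.trans (erase_subset _ _)) hSF
      have heq : chainCount (insert S F) (k + 1)
          = chainCount (insert S (shrinkSys H x₁ F)) (k + 1) := by
        apply chainCount_eq_of_iso _ _ φ
        · intro A hA
          rcases mem_insert.mp hA with hAe | hA
          · rw [hAe, hφ1 _ hSH]; exact mem_insert_self _ _
          · exact mem_insert_of_mem (hmem A hA)
        · intro B hB
          rcases mem_insert.mp hB with hBe | hB
          · exact ⟨S, mem_insert_self _ _, (hφ1 _ hSH).trans hBe.symm⟩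
          · obtain ⟨A, hA, h⟩ := hsurj B hB
            exact ⟨A, mem_insert_of_mem hA, h⟩
        · intro A hA A' hA' h
          rcases mem_insert.mp hA with hAe | hA
          · rcases mem_insert.mp hA' with hA'e | hA'
            · exact hAe.trans hA'e.symm
            · exfalso
              rw [hAe, hφ1 _ hSH] at h
              have hm := hmem A' hA'
              rw [← h] at hm
              exact hSF₁ hm
          · rcases mem_insert.mp hA' with hA'e | hA'
            · exfalso
              rw [hA'e, hφ1 _ hSH] at h
              have hm := hmem A hA
              rw [h] at hm
              exact hSF₁ hm
            · exact hinj A hA A' hA' h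
        · intro A hA A' hA'
          rcases mem_insert.mp hA with hAe | hA
          · rcases mem_insert.mp hA' with hA'e | hA'
            · rw [hAe, hA'e]
              exact ⟨fun _ => Finset.Subset.refl _, fun _ => Finset.Subset.refl _⟩
            · rw [hAe, hφ1 _ hSH]
              rcases hAtom A' hA' with h2 | h2
              · rw [hφ1 A' h2]
              · rw [hφ2 A' h2, Finset.subset_erase]
                exact ⟨fun h => ⟨h, hx₁S⟩, fun h => h.1⟩
          · rcases mem_insert.mp hA' with hA'e | hA'
            · rw [hA'e, hφ1 _ hSH]
              rcases hAtom A hA with h1 | h1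
              · rw [hφ1 A h1]
              · rw [hφ2 A h1]
                constructor
                · intro h; exact absurd (h (h1 hx₂H)) (hnx2 _ hSH)
                · intro h; exact absurd (h (mem_erase.mpr ⟨hx₂, h1 hx₂H⟩)) (hnx2 _ hSH)
            · exact hsub A hA A' hA'
      rw [hcc, heq] at hlt
      exact hlt
    · obtain ⟨y, hy⟩ := Finset.nonempty_iff_ne_empty.mpr hSH
      obtain ⟨hyS, hyH⟩ := mem_inter.mp hy
      set T : Finset α := insert x₁ S with hTdef
      have hTX : T ⊆ X := Finset.insert_subset (hHX hx) (hS.trans (erase_subset _ _))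
      have hTF : T ∉ F := by
        intro h
        rcases hAtom T h with h' | h'
        · exact hnx1 T h' (mem_insert_self _ _)
        · have hm := hmem T h
          rw [hφ2 _ h', hTdef, Finset.erase_insert hx₁S] at hm
          exact hSF₁ hm
      have hlt := hFsat T hTX hTF
      have heq : chainCount (insert T F) (k + 1)
          = chainCount (insert S (shrinkSys H x₁ F)) (k + 1) := by
        apply chainCount_eq_of_iso _ _ (fun A => if A = T then S else φ A)
        · intro A hA
          rcases mem_insert.mp hA with hAe | hA
          · rw [hAe, if_pos rfl]; exact mem_insert_self _ _
          · rw [if_neg (by rintro rfl; exact hTF hA)]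
            exact mem_insert_of_mem (hmem A hA)
        · intro B hB
          rcases mem_insert.mp hB with hBe | hB
          · exact ⟨T, mem_insert_self _ _, (if_pos rfl).trans hBe.symm⟩
          · obtain ⟨A, hA, h⟩ := hsurj B hB
            exact ⟨A, mem_insert_of_mem hA,
              by rw [if_neg (by rintro rfl; exact hTF hA)]; exact h⟩
        · intro A hA A' hA' h
          rcases mem_insert.mp hA with hAe | hA
          · rcases mem_insert.mp hA' with hA'e | hA'
            · exact hAe.trans hA'e.symm
            · rw [hAe, if_pos rfl, if_neg (by rintro rfl; exact hTF hA')] at h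
              have hm := hmem A' hA'
              rw [← h] at hm
              exact absurd hm hSF₁
          · rcases mem_insert.mp hA' with hA'e | hA'
            · rw [hA'e, if_pos rfl, if_neg (by rintro rfl; exact hTF hA)] at h
              have hm := hmem A hA
              rw [h] at hm
              exact absurd hm hSF₁
            · rw [if_neg (by rintro rfl; exact hTF hA),
                if_neg (by rintro rfl; exact hTF hA')] at h
              exact hinj A hA A' hA' h
        · intro A hA A' hA'
          rcases mem_insert.mp hA with hAe | hA
          · rcases mem_insert.mp hA' with hA'e | hA'
            · rw [hAe, hA'e]
              exact ⟨fun _ => Finset.Subset.refl _, fun _ => Finset.Subset.refl _⟩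
            · rw [hAe, if_pos rfl, if_neg (by rintro rfl; exact hTF hA')]
              rcases hAtom A' hA' with h2 | h2
              · rw [hφ1 A' h2]
                constructor
                · intro h; exact absurd (h (mem_insert_self _ _)) (hnx1 A' h2)
                · intro h
                  have hcontra : y ∈ A' ∩ H := mem_inter.mpr ⟨h hyS, hyH⟩
                  simp [h2] at hcontra
              · rw [hφ2 A' h2, Finset.subset_erase, hTdef, Finset.insert_subset_iff]
                constructor
                · rintro ⟨-, h⟩; exact ⟨h, hx₁S⟩
                · rintro ⟨h, -⟩; exact ⟨h2 hx, h⟩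
          · rcases mem_insert.mp hA' with hA'e | hA'
            · rw [hA'e, if_pos rfl, if_neg (by rintro rfl; exact hTF hA)]
              rcases hAtom A hA with h1 | h1
              · rw [hφ1 A h1, hTdef, Finset.subset_insert_iff,
                  Finset.erase_eq_of_notMem (hnx1 A h1)]
              · rw [hφ2 A h1, hTdef, Finset.subset_insert_iff]
            · rw [if_neg (by rintro rfl; exact hTF hA),
                if_neg (by rintro rfl; exact hTF hA')]
              exact hsub A hA A' hA'
      rw [hcc, heq] at hlt
      exact hlt
end

section
/- Let k ≥ 1 and let X be a set with |X| = k² + k. For every t with 1 ≤ t ≤ k² + k there exist nonempty families F_t, G_t ⊆ P(X) such that: (a) for every F ∈ F_t and G ∈ G_t, |F| + |G| ≥ k; (b) |F_t| + |G_t| = O(k² 2^{k/2}); (c) for every S ⊆ X with |S| = t, there exist F ∈ F_t with F ⊊ S and G ∈ G_t with G ∩ S = ∅. -/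
open Finset

variable {α : Type*} [DecidableEq α]

section AuxSatProof

set_option maxHeartbeats 1000000 in
lemma log_ge (x : ℝ) (hx : 0 < x) : 1 - x⁻¹ ≤ Real.log x := by
  have h := Real.log_le_sub_one_of_pos (x := x⁻¹) (by positivity)
  rw [Real.log_inv] at h
  linarith [h]

lemma key_half (y : ℝ) (h0 : 0 ≤ y) (h1 : y ≤ 1/2) :
    2 * Real.log (((1+y)/2)⁻¹) * Real.log (((1-y)/2)⁻¹) ≤
      Real.log 2 * (Real.log (((1+y)/2)⁻¹) + Real.log (((1-y)/2)⁻¹)) := by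
  have hy1 : (0:ℝ) < 1 + y := by linarith
  have hy2 : (0:ℝ) < 1 - y := by linarith
  set α := Real.log (1+y) with hα
  set β := -Real.log (1-y) with hβ
  have e1 : Real.log (((1+y)/2)⁻¹) = Real.log 2 - α := by
    rw [Real.log_inv, Real.log_div (by positivity) (by norm_num)]; ring
  have e2 : Real.log (((1-y)/2)⁻¹) = Real.log 2 + β := by
    rw [Real.log_inv, Real.log_div (by positivity) (by norm_num)]; ring
  rw [e1, e2]
  have hlog2 : Real.log 2 ≤ 1 := by
    have := Real.log_le_sub_one_of_pos (x := 2) (by norm_num); linarith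
  have hlog2' : 0 < Real.log 2 := Real.log_pos (by norm_num)
  have hαlb : (2/3) * y ≤ α := by
    have h' : y/(1+y) ≤ α := by
      have hg := log_ge (1+y) hy1
      have he : 1 - (1+y)⁻¹ = y/(1+y) := by field_simp; ring
      rw [hα]; linarith [he ▸ hg]
    have h'' : (2/3) * y ≤ y/(1+y) := by
      rw [le_div_iff₀ hy1]; nlinarith
    linarith
  have hβlb : y ≤ β := by
    have := Real.log_le_sub_one_of_pos hy2
    rw [hβ]; linarith
  have hysq : y^2 ≤ 1/4 := by nlinarith
  have hdiff : β - α ≤ (4/3) * y^2 := by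
    have hmul : Real.log ((1-y)*(1+y)) = Real.log (1-y) + Real.log (1+y) :=
      Real.log_mul (by positivity) (by positivity)
    have h1y2 : (1-y)*(1+y) = 1 - y^2 := by ring
    have hy2pos : (0:ℝ) < 1 - y^2 := by nlinarith
    have heq : β - α = -Real.log (1 - y^2) := by
      rw [hβ, hα, ← h1y2, hmul]; ring
    rw [heq]
    have hlog3 := log_ge (1 - y^2) hy2pos
    have hinv : (1 - y^2)⁻¹ ≤ 1 + (4/3) * y^2 := by
      rw [inv_le_iff_one_le_mul₀ hy2pos]
      nlinarith [sq_nonneg y, mul_le_mul_of_nonneg_left hysq (sq_nonneg y)]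
    nlinarith [hlog3, hinv]
  have hprod : (2/3)*y*y ≤ α*β :=
    mul_le_mul hαlb hβlb h0 (le_trans (by positivity) hαlb)
  have h5 : Real.log 2 * (β-α) ≤ Real.log 2 * ((4/3)*y^2) :=
    mul_le_mul_of_nonneg_left hdiff hlog2'.le
  have h6 : Real.log 2 * ((4/3)*y^2) ≤ (4/3)*y^2 := by nlinarith [sq_nonneg y]
  nlinarith [h5, h6, hprod]

lemma key_ineq (p : ℝ) (h1 : 1/4 ≤ p) (h2 : p ≤ 3/4) :
    2 * Real.log p⁻¹ * Real.log (1-p)⁻¹ ≤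
      Real.log 2 * (Real.log p⁻¹ + Real.log (1-p)⁻¹) := by
  rcases le_total (1/2 : ℝ) p with h | h
  · have := key_half (2*p - 1) (by linarith) (by linarith)
    have e1 : (1 + (2*p-1))/2 = p := by ring
    have e2 : (1 - (2*p-1))/2 = 1 - p := by ring
    rw [e1, e2] at this
    linarith
  · have := key_half (1 - 2*p) (by linarith) (by linarith)
    have e1 : (1 + (1-2*p))/2 = 1 - p := by ring
    have e2 : (1 - (1-2*p))/2 = p := by ring
    rw [e1, e2] at this
    linarith [this]

lemma choose_ratio_aux (n m : ℕ) (hmn : m ≤ n) :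
    ∀ a : ℕ, 2*a ≤ m →
      (n.choose a : ℝ) * (m:ℝ)^a ≤ Real.exp ((a:ℝ)^2/m) * (n:ℝ)^a * (m.choose a)
  | 0, _ => by simp
  | a+1, h => by
    have h2a : 2*a ≤ m := by omega
    have IH := choose_ratio_aux n m hmn a h2a
    have ham : a < m := by omega
    have han : a < n := lt_of_lt_of_le ham hmn
    have hm0 : (0:ℝ) < m := by
      have : 0 < m := by omega
      exact_mod_cast this
    have hamR : (a:ℝ) ≤ m := by exact_mod_cast ham.le
    have hanR : (a:ℝ) ≤ n := by exact_mod_cast han.le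
    have h2aR : 2*(a:ℝ) + 2 ≤ m := by exact_mod_cast h
    have recn : (n.choose (a+1) : ℝ) * ((a:ℝ)+1) = (n.choose a) * ((n:ℝ) - a) := by
      have h' := congrArg (Nat.cast (R := ℝ)) (Nat.choose_succ_right_eq n a)
      push_cast [Nat.cast_sub han.le] at h'
      linarith
    have recm : (m.choose (a+1) : ℝ) * ((a:ℝ)+1) = (m.choose a) * ((m:ℝ) - a) := by
      have h' := congrArg (Nat.cast (R := ℝ)) (Nat.choose_succ_right_eq m a)
      push_cast [Nat.cast_sub ham.le] at h'
      linarith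
    have hnm : (0:ℝ) ≤ (n:ℝ) * ((m:ℝ) - a) := by nlinarith
    have hstep : ((n:ℝ) - a) * m ≤ Real.exp ((2*(a:ℝ)+1)/m) * ((n:ℝ) * ((m:ℝ) - a)) := by
      have he : (2*(a:ℝ)+1)/m + 1 ≤ Real.exp ((2*(a:ℝ)+1)/m) := Real.add_one_le_exp _
      have hkey : ((n:ℝ) - a) * m ≤ ((2*(a:ℝ)+1)/m + 1) * ((n:ℝ) * ((m:ℝ) - a)) := by
        rw [div_add' _ _ _ (ne_of_gt hm0), div_mul_eq_mul_div, le_div_iff₀ hm0]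
        have hmnR : (m:ℝ) ≤ n := by exact_mod_cast hmn
        have t1 : 0 ≤ (a:ℝ)*n*((m:ℝ)-2*a) :=
          mul_nonneg (mul_nonneg (Nat.cast_nonneg a) (Nat.cast_nonneg n)) (by linarith)
        have t3 : 0 ≤ (a:ℝ)*((m:ℝ)*(m:ℝ)) :=
          mul_nonneg (Nat.cast_nonneg a) (by positivity)
        nlinarith [t1, t3, hnm]
      calc ((n:ℝ) - a) * m ≤ ((2*(a:ℝ)+1)/m + 1) * ((n:ℝ) * ((m:ℝ) - a)) := hkey
        _ ≤ Real.exp ((2*(a:ℝ)+1)/m) * ((n:ℝ) * ((m:ℝ) - a)) :=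
            mul_le_mul_of_nonneg_right he hnm
    have ha1 : (0:ℝ) < (a:ℝ) + 1 := by positivity
    rw [← mul_le_mul_iff_of_pos_right ha1]
    push_cast
    have lhs_eq : (n.choose (a+1) : ℝ) * (m:ℝ)^(a+1) * ((a:ℝ)+1)
        = ((n.choose a : ℝ) * (m:ℝ)^a) * (((n:ℝ) - a) * m) := by
      rw [pow_succ]
      linear_combination ((m:ℝ)^a * (m:ℝ)) * recn
    have expsplit : Real.exp (((a:ℝ)+1)^2/m) = Real.exp ((a:ℝ)^2/m) * Real.exp ((2*(a:ℝ)+1)/m) := by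
      rw [← Real.exp_add]; congr 1; field_simp; ring
    have rhs_eq : Real.exp (((a:ℝ)+1)^2/m) * (n:ℝ)^(a+1) * (m.choose (a+1) : ℝ) * ((a:ℝ)+1)
        = (Real.exp ((a:ℝ)^2/m) * (n:ℝ)^a * (m.choose a : ℝ))
            * (Real.exp ((2*(a:ℝ)+1)/m) * ((n:ℝ)*((m:ℝ)-a))) := by
      have habs : ∀ (E1 E2 nn cm1 cm2 aa mm nna : ℝ), cm2 * (aa+1) = cm1 * (mm - aa) →
          E1*E2 * (nna * nn) * cm2 * (aa+1) = (E1 * nna * cm1) * (E2 * (nn*(mm-aa))) := by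
        intro E1 E2 nn cm1 cm2 aa mm nna hrec
        linear_combination (E1 * E2 * nna * nn) * hrec
      rw [expsplit, pow_succ]
      exact habs _ _ _ _ _ _ _ _ recm
    calc (n.choose (a+1):ℝ) * (m:ℝ)^(a+1) * ((a:ℝ)+1)
        = ((n.choose a : ℝ) * (m:ℝ)^a) * (((n:ℝ) - a) * m) := lhs_eq
      _ ≤ (Real.exp ((a:ℝ)^2/m) * (n:ℝ)^a * (m.choose a : ℝ))
            * (Real.exp ((2*(a:ℝ)+1)/m) * ((n:ℝ)*((m:ℝ)-a))) := by
          apply mul_le_mul IH hstep (by nlinarith) (by positivity)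
      _ = Real.exp (((a:ℝ)+1)^2/m) * (n:ℝ)^(a+1) * (m.choose (a+1) : ℝ) * ((a:ℝ)+1) := rhs_eq.symm

lemma choose_ratio (n m k a : ℕ) (hmn : m ≤ n) (ha : a ≤ k) (hk2 : 2*k ≤ m) :
    (n.choose a : ℝ) ≤ Real.exp ((k:ℝ)^2/m) * ((n:ℝ)/m)^a * (m.choose a) := by
  rcases Nat.eq_zero_or_pos m with hm | hm
  · have hk0 : k = 0 := by omega
    have ha0 : a = 0 := by omega
    subst hm hk0 ha0
    simp
  · have hm0 : (0:ℝ) < m := by exact_mod_cast hm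
    have h2a : 2*a ≤ m := by omega
    have haux := choose_ratio_aux n m hmn a h2a
    have hexp : Real.exp ((a:ℝ)^2/m) ≤ Real.exp ((k:ℝ)^2/m) := by
      apply Real.exp_le_exp.2
      gcongr <;> first | positivity | exact_mod_cast ha
    have hmono : (n.choose a : ℝ) * (m:ℝ)^a ≤ Real.exp ((k:ℝ)^2/m) * (n:ℝ)^a * (m.choose a) := by
      calc (n.choose a : ℝ) * (m:ℝ)^a ≤ Real.exp ((a:ℝ)^2/m) * (n:ℝ)^a * (m.choose a) := haux
        _ ≤ Real.exp ((k:ℝ)^2/m) * (n:ℝ)^a * (m.choose a) := by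
            apply mul_le_mul_of_nonneg_right (mul_le_mul_of_nonneg_right hexp (by positivity)) (by positivity)
    rw [← mul_le_mul_iff_of_pos_right (pow_pos hm0 a)]
    calc (n.choose a : ℝ) * (m:ℝ)^a ≤ Real.exp ((k:ℝ)^2/m) * (n:ℝ)^a * (m.choose a) := hmono
      _ = Real.exp ((k:ℝ)^2/m) * ((n:ℝ)/m)^a * (m.choose a) * (m:ℝ)^a := by
          rw [div_pow]; field_simp; try ring

lemma choose_le_two_pow' (n τ : ℕ) : n.choose τ ≤ 2 ^ n := by
  rcases le_or_gt τ n with h | h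
  · calc n.choose τ ≤ ∑ i ∈ Finset.range (n+1), n.choose i :=
        Finset.single_le_sum (fun i _ => Nat.zero_le _) (Finset.mem_range.2 (by omega))
      _ = 2 ^ n := Nat.sum_range_choose n
  · rw [Nat.choose_eq_zero_of_lt h]; positivity

lemma count_core (N M s : ℕ) (hM : 0 < M) (hMN : M ≤ N) (hs : N < M * s) :
    2 * (N - M)^s < N^s := by
  have hs1 : 1 ≤ s := by
    rcases Nat.eq_zero_or_pos s with h | h
    · subst h; omega
    · exact h
  rcases eq_or_lt_of_le hMN with rfl | h
  · rw [Nat.sub_self, zero_pow (by omega)]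
    have : 0 < M^s := pow_pos (by omega) s
    omega
  · have hN0 : (0:ℝ) < N := by exact_mod_cast (by omega : 0 < N)
    have hreal : 2 * ((N:ℝ) - M)^s < (N:ℝ)^s := by
      have hx : ((N:ℝ) - M) = N * (1 - (M:ℝ)/N) := by field_simp
      have h1x : (0:ℝ) ≤ 1 - (M:ℝ)/N := by
        rw [sub_nonneg, div_le_one hN0]; exact_mod_cast hMN
      have hexp : (1 - (M:ℝ)/N) ≤ Real.exp (-((M:ℝ)/N)) := by
        have := Real.add_one_le_exp (-((M:ℝ)/N))
        linarith
      have hpow : (1 - (M:ℝ)/N)^s ≤ Real.exp (-((M:ℝ)/N))^s :=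
        pow_le_pow_left₀ h1x hexp s
      rw [← Real.exp_nat_mul] at hpow
      have harg : (s:ℝ) * (-((M:ℝ)/N)) < -1 := by
        have h1 : (1:ℝ) < (s:ℝ) * ((M:ℝ)/N) := by
          rw [← mul_div_assoc, lt_div_iff₀ hN0]
          have : (N:ℝ) < M * s := by exact_mod_cast hs
          linarith
        linarith [h1]
      have hlt : Real.exp ((s:ℝ) * (-((M:ℝ)/N))) < Real.exp (-1) :=
        Real.exp_lt_exp.2 harg
      have hhalf : Real.exp (-1 : ℝ) < 1/2 := by
        rw [Real.exp_neg, inv_lt_comm₀ (Real.exp_pos 1) (by norm_num)]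
        norm_num
        exact lt_trans (by norm_num) Real.exp_one_gt_d9
      have hfin : (1 - (M:ℝ)/N)^s < 1/2 := lt_of_le_of_lt hpow (lt_trans hlt hhalf)
      calc 2 * ((N:ℝ) - M)^s = 2 * ((N:ℝ)^s * (1 - (M:ℝ)/N)^s) := by
            rw [hx, mul_pow]
        _ < (N:ℝ)^s := by
            have hNs : (0:ℝ) < (N:ℝ)^s := pow_pos hN0 s
            nlinarith [hfin, hNs]
    rw [← Nat.cast_sub hMN] at hreal
    exact_mod_cast hreal

lemma cover_lemma {α : Type*} [DecidableEq α] (X : Finset α) (a τ m : ℕ)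
    (haτ : a ≤ τ) (hτX : τ ≤ X.card)
    (hm : X.card.choose τ * (X.card.choose a - τ.choose a)^m < (X.card.choose a)^m) :
    ∃ 𝒞 : Finset (Finset α), 𝒞.Nonempty ∧ 𝒞.card ≤ m ∧
      (∀ A ∈ 𝒞, A ⊆ X ∧ A.card = a) ∧
      ∀ S ⊆ X, S.card = τ → ∃ A ∈ 𝒞, A ⊆ S := by
  classical
  have hm1 : 1 ≤ m := by
    by_contra h
    have hm0 : m = 0 := by omega
    subst hm0
    simp only [pow_zero, mul_one] at hm
    have := Nat.choose_pos hτX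
    omega
  set P : Finset (Finset α) := X.powersetCard a with hP
  have hPcard : P.card = X.card.choose a := Finset.card_powersetCard a X
  set T : Finset (Fin m → Finset α) := Fintype.piFinset (fun _ : Fin m => P) with hT
  have hTcard : T.card = P.card ^ m := Fintype.card_piFinset_const P m
  set Bad : Finset (Fin m → Finset α) :=
    T.filter (fun f => ∃ S ∈ X.powersetCard τ, ∀ i, f i ∉ S.powersetCard a) with hBad
  have hsub : Bad ⊆ (X.powersetCard τ).biUnion
      (fun S => Fintype.piFinset (fun _ : Fin m => P \ S.powersetCard a)) := by
    intro f hf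
    rw [hBad, Finset.mem_filter] at hf
    obtain ⟨hfT, S, hS, hSf⟩ := hf
    rw [Finset.mem_biUnion]
    refine ⟨S, hS, ?_⟩
    rw [Fintype.mem_piFinset]
    intro i
    rw [Finset.mem_sdiff]
    exact ⟨(Fintype.mem_piFinset.1 hfT) i, hSf i⟩
  have hBadCard : Bad.card ≤ X.card.choose τ * (X.card.choose a - τ.choose a)^m := by
    calc Bad.card ≤ ∑ S ∈ X.powersetCard τ,
          (Fintype.piFinset (fun _ : Fin m => P \ S.powersetCard a)).card :=
        le_trans (Finset.card_le_card hsub) (Finset.card_biUnion_le)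
      _ ≤ ∑ _S ∈ X.powersetCard τ, (X.card.choose a - τ.choose a)^m := by
          apply Finset.sum_le_sum
          intro S hS
          rw [Fintype.card_piFinset_const]
          apply Nat.pow_le_pow_left
          rw [Finset.mem_powersetCard] at hS
          have hsub' : S.powersetCard a ⊆ P :=
            Finset.powersetCard_mono hS.1
          rw [Finset.card_sdiff_of_subset hsub', hPcard, Finset.card_powersetCard, hS.2]
      _ = X.card.choose τ * (X.card.choose a - τ.choose a)^m := by
          rw [Finset.sum_const, Finset.card_powersetCard, smul_eq_mul]
  have hlt : Bad.card < T.card := by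
    rw [hTcard, hPcard]
    exact lt_of_le_of_lt hBadCard hm
  have hns : ¬ T ⊆ Bad := fun hsub' => absurd (Finset.card_le_card hsub') (not_le.2 hlt)
  obtain ⟨f, hfT, hfBad⟩ := Finset.not_subset.1 hns
  refine ⟨Finset.image f Finset.univ, ?_, ?_, ?_, ?_⟩
  · apply Finset.Nonempty.image
    exact ⟨⟨0, by omega⟩, Finset.mem_univ _⟩
  · exact le_trans Finset.card_image_le (by simp)
  · intro A hA
    obtain ⟨i, _, rfl⟩ := Finset.mem_image.1 hA
    have := (Fintype.mem_piFinset.1 hfT) i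
    rw [hP, Finset.mem_powersetCard] at this
    exact this
  · intro S hSX hScard
    have hfgood : ¬ ∃ S ∈ X.powersetCard τ, ∀ i, f i ∉ S.powersetCard a := by
      intro hbad
      exact hfBad (by rw [hBad, Finset.mem_filter]; exact ⟨hfT, hbad⟩)
    push_neg at hfgood
    obtain ⟨i, hi⟩ := hfgood S (Finset.mem_powersetCard.2 ⟨hSX, hScard⟩)
    refine ⟨f i, Finset.mem_image.2 ⟨i, Finset.mem_univ _, rfl⟩, ?_⟩
    exact (Finset.mem_powersetCard.1 hi).1

lemma side_family {α : Type*} [DecidableEq α] (X : Finset α) (a τ : ℕ) (R : ℝ)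
    (hR : 1 ≤ R) (haτ : a ≤ τ) (hτX : τ ≤ X.card) (hX1 : 1 ≤ X.card)
    (hbound : (X.card.choose a : ℝ) ≤ R * (τ.choose a)) :
    ∃ 𝒞 : Finset (Finset α), 𝒞.Nonempty ∧ (∀ A ∈ 𝒞, A ⊆ X ∧ A.card = a) ∧
      ((𝒞.card : ℝ) ≤ (X.card : ℝ) * (R + 1)) ∧
      ∀ S ⊆ X, S.card = τ → ∃ A ∈ 𝒞, A ⊆ S := by
  set n := X.card with hn
  set N := n.choose a with hN
  set M := τ.choose a with hM
  have hMpos : 0 < M := Nat.choose_pos haτ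
  have hMN : M ≤ N := Nat.choose_le_choose a hτX
  set s := N / M + 1 with hs
  have hNs : N < M * s := by
    have h1 := Nat.div_add_mod N M
    have h2 := Nat.mod_lt N hMpos
    rw [hs]
    calc N = M * (N / M) + N % M := h1.symm
      _ < M * (N / M) + M := by omega
      _ = M * (N / M + 1) := by ring
  have hcore : 2 * (N - M)^s < N^s := count_core N M s hMpos hMN hNs
  have hmles : n.choose τ * (N - M)^(n * s) < N^(n * s) := by
    calc n.choose τ * (N - M)^(n * s) ≤ 2^n * (N - M)^(n * s) :=
        Nat.mul_le_mul_right _ (choose_le_two_pow' n τ)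
      _ = (2 * (N - M)^s)^n := by
          rw [mul_pow, ← pow_mul, Nat.mul_comm s n]
      _ < (N^s)^n := Nat.pow_lt_pow_left hcore (by omega)
      _ = N^(n * s) := by rw [← pow_mul, Nat.mul_comm s n]
  obtain ⟨𝒞, hne, hcard, hmem, hcov⟩ := cover_lemma X a τ (n * s) haτ hτX hmles
  refine ⟨𝒞, hne, hmem, ?_, hcov⟩
  have hsR : (s:ℝ) ≤ R + 1 := by
    have h1 : ((N / M : ℕ) : ℝ) ≤ (N:ℝ) / M := Nat.cast_div_le
    have h2 : (N:ℝ) / M ≤ R := by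
      rw [div_le_iff₀ (by exact_mod_cast hMpos)]
      exact hbound
    rw [hs]
    push_cast
    linarith
  calc (𝒞.card : ℝ) ≤ ((n * s : ℕ) : ℝ) := by exact_mod_cast hcard
    _ = (n : ℝ) * s := by push_cast; ring
    _ ≤ (n : ℝ) * (R + 1) := by
        apply mul_le_mul_of_nonneg_left hsR (by positivity)

noncomputable def Rbound (k : ℕ) : ℝ := Real.exp 4 * (2:ℝ)^((k:ℝ)/2 + 2)

lemma one_le_Rbound (k : ℕ) : 1 ≤ Rbound k := by
  have h1 : (1:ℝ) ≤ Real.exp 4 := Real.one_le_exp (by norm_num)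
  have h2 : (1:ℝ) ≤ (2:ℝ)^((k:ℝ)/2 + 2) := by
    rw [show (1:ℝ) = (2:ℝ)^(0:ℝ) by rw [Real.rpow_zero]]
    apply Real.rpow_le_rpow_of_exponent_le one_le_two (by positivity)
  calc (1:ℝ) = 1 * 1 := by ring
    _ ≤ Real.exp 4 * (2:ℝ)^((k:ℝ)/2 + 2) := mul_le_mul h1 h2 (by norm_num) (by positivity)

lemma hbound_of (n m a k : ℕ) (hm0 : 0 < m) (hmn : m ≤ n) (ha : a ≤ k) (h2k : 2*k ≤ m)
    (hk2m : (k:ℝ)^2 ≤ 4*m)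
    (hpow : (a:ℝ) * Real.log ((n:ℝ)/m) ≤ ((k:ℝ)/2 + 2) * Real.log 2) :
    (n.choose a : ℝ) ≤ Rbound k * (m.choose a) := by
  have hmR : (0:ℝ) < m := by exact_mod_cast hm0
  have hnR : (0:ℝ) < n := lt_of_lt_of_le hmR (by exact_mod_cast hmn)
  have hx : (0:ℝ) < (n:ℝ)/m := by positivity
  have h1 : Real.exp ((k:ℝ)^2/m) ≤ Real.exp 4 := by
    apply Real.exp_le_exp.2
    rw [div_le_iff₀ hmR]
    linarith
  have h2 : ((n:ℝ)/m)^a ≤ (2:ℝ)^((k:ℝ)/2 + 2) := by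
    have e1 : ((n:ℝ)/m)^a = Real.exp (Real.log ((n:ℝ)/m) * a) := by
      rw [← Real.rpow_natCast ((n:ℝ)/m) a, Real.rpow_def_of_pos hx]
    have e2 : (2:ℝ)^((k:ℝ)/2 + 2) = Real.exp (Real.log 2 * ((k:ℝ)/2 + 2)) := by
      rw [Real.rpow_def_of_pos (by norm_num)]
    rw [e1, e2]
    apply Real.exp_le_exp.2
    calc Real.log ((n:ℝ)/m) * a = (a:ℝ) * Real.log ((n:ℝ)/m) := by ring
      _ ≤ ((k:ℝ)/2 + 2) * Real.log 2 := hpow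
      _ = Real.log 2 * ((k:ℝ)/2 + 2) := by ring
  calc (n.choose a : ℝ) ≤ Real.exp ((k:ℝ)^2/m) * ((n:ℝ)/m)^a * (m.choose a) :=
      choose_ratio n m k a hmn ha h2k
    _ ≤ Real.exp 4 * (2:ℝ)^((k:ℝ)/2 + 2) * (m.choose a) := by
        apply mul_le_mul_of_nonneg_right _ (Nat.cast_nonneg _)
        exact mul_le_mul h1 h2 (by positivity) (by positivity)
    _ = Rbound k * (m.choose a) := by rw [Rbound]

lemma log43 : 2 * Real.log (4/3) ≤ Real.log 2 := by
  have h : Real.log (((4:ℝ)/3)^2) ≤ Real.log 2 := by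
    apply Real.log_le_log (by positivity)
    norm_num
  rw [Real.log_pow] at h
  push_cast at h
  linarith

lemma choose_ab (k t n : ℕ) (hk : 100 ≤ k) (hn : n = k^2 + k) (ht1 : 1 ≤ t) (htn : t ≤ n) :
    ∃ a b : ℕ, a + b = k ∧ a < t ∧ b ≤ n - t ∧
      ((n.choose a : ℝ) ≤ Rbound k * (t.choose a)) ∧
      ((n.choose b : ℝ) ≤ Rbound k * ((n - t).choose b)) := by
  have hn' : n = k*k + k := by rw [hn]; ring
  have hkk : 100*k ≤ k*k := Nat.mul_le_mul_right k hk
  set u := n - t with hu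
  clear_value u
  have hut : u + t = n := by omega
  have hlog2pos : (0:ℝ) < Real.log 2 := Real.log_pos (by norm_num)
  have htR : (0:ℝ) < t := by exact_mod_cast ht1
  have hnR : (0:ℝ) < n := by
    have : 0 < n := by omega
    exact_mod_cast this
  -- the "easy" trivial bound for a = 0
  have htriv : ∀ m : ℕ, (n.choose 0 : ℝ) ≤ Rbound k * (m.choose 0) := by
    intro m
    simp only [Nat.choose_zero_right, Nat.cast_one, mul_one]
    exact one_le_Rbound k
  rcases le_or_gt (4*t) n with hA | hA
  · -- Case A : t small
    refine ⟨0, k, by omega, by omega, by omega, htriv t, ?_⟩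
    apply hbound_of n u k k (by omega) (by omega) le_rfl (by omega) ?_ ?_
    · have h4u : (3:ℝ)*n ≤ 4*u := by
        have : 3*n ≤ 4*u := by omega
        exact_mod_cast this
      have hkn : (k:ℝ)*k ≤ n := by
        have : k*k ≤ n := by omega
        exact_mod_cast this
      push_cast
      nlinarith
    · have huR : (0:ℝ) < u := by
        have : 0 < u := by omega
        exact_mod_cast this
      have hfrac : (n:ℝ)/u ≤ 4/3 := by
        rw [div_le_div_iff₀ huR (by norm_num)]
        have : (3:ℝ)*n ≤ 4*u := by exact_mod_cast (by omega : 3*n ≤ 4*u)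
        linarith
      have hlogle : Real.log ((n:ℝ)/u) ≤ Real.log (4/3) :=
        Real.log_le_log (by positivity) hfrac
      have hlog43nn : (0:ℝ) ≤ Real.log (4/3) := Real.log_nonneg (by norm_num)
      calc (k:ℝ) * Real.log ((n:ℝ)/u) ≤ (k:ℝ) * Real.log (4/3) := by
            apply mul_le_mul_of_nonneg_left hlogle (Nat.cast_nonneg k)
        _ ≤ (k:ℝ)/2 * Real.log 2 := by nlinarith [log43, Nat.cast_nonneg (α := ℝ) k]
        _ ≤ ((k:ℝ)/2 + 2) * Real.log 2 := by nlinarith [hlog2pos]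
  rcases le_or_gt (4*u) n with hB | hB
  · -- Case B : t large
    have hkt : k < t := by omega
    refine ⟨k, 0, by omega, hkt, by omega, ?_, ?_⟩
    · apply hbound_of n t k k (by omega) htn le_rfl (by omega) ?_ ?_
      · have : (k:ℝ)*k ≤ n := by exact_mod_cast (by omega : k*k ≤ n)
        have h4t : (3:ℝ)*n ≤ 4*t := by exact_mod_cast (by omega : 3*n ≤ 4*t)
        push_cast
        nlinarith
      · have hfrac : (n:ℝ)/t ≤ 4/3 := by
          rw [div_le_div_iff₀ htR (by norm_num)]
          have : (3:ℝ)*n ≤ 4*t := by exact_mod_cast (by omega : 3*n ≤ 4*t)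
          linarith
        have hlogle : Real.log ((n:ℝ)/t) ≤ Real.log (4/3) :=
          Real.log_le_log (by positivity) hfrac
        calc (k:ℝ) * Real.log ((n:ℝ)/t) ≤ (k:ℝ) * Real.log (4/3) := by
              apply mul_le_mul_of_nonneg_left hlogle (Nat.cast_nonneg k)
          _ ≤ (k:ℝ)/2 * Real.log 2 := by nlinarith [log43, Nat.cast_nonneg (α := ℝ) k]
          _ ≤ ((k:ℝ)/2 + 2) * Real.log 2 := by nlinarith [hlog2pos]
    · simpa using htriv u
  -- Case C : middle range
  have huR : (0:ℝ) < u := by exact_mod_cast (by omega : 0 < u)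
  set Lp := Real.log ((n:ℝ)/t) with hLp
  clear_value Lp
  set Lq := Real.log ((n:ℝ)/u) with hLq
  clear_value Lq
  have hLppos : 0 < Lp := by
    rw [hLp]
    apply Real.log_pos
    rw [lt_div_iff₀ htR]
    have h' : t < n := by omega
    have := (Nat.cast_lt (α := ℝ)).2 h'
    linarith
  have hLqpos : 0 < Lq := by
    rw [hLq]
    apply Real.log_pos
    rw [lt_div_iff₀ huR]
    have h' : u < n := by omega
    have := (Nat.cast_lt (α := ℝ)).2 h'
    linarith
  set K := (k:ℝ)/2 + 2 with hK
  clear_value K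
  have hKpos : (0:ℝ) < K := by rw [hK]; positivity
  -- key inequality instantiated
  have hkey : 2 ≤ Real.log 2 / Lp + Real.log 2 / Lq := by
    have hp14 : (1:ℝ)/4 ≤ (t:ℝ)/n := by
      rw [div_le_div_iff₀ (by norm_num) hnR]
      have : (n:ℝ) ≤ 4*t := by exact_mod_cast (by omega : n ≤ 4*t)
      linarith
    have hp34 : (t:ℝ)/n ≤ 3/4 := by
      rw [div_le_div_iff₀ hnR (by norm_num)]
      have : (n:ℝ) ≤ 4*u := by exact_mod_cast (by omega : n ≤ 4*u)
      have hcast : (u:ℝ) + t = n := by exact_mod_cast hut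
      linarith
    have hK0 := key_ineq ((t:ℝ)/n) hp14 hp34
    have e1 : ((t:ℝ)/n)⁻¹ = (n:ℝ)/t := by rw [inv_div]
    have e2 : (1 - (t:ℝ)/n)⁻¹ = (n:ℝ)/u := by
      have hcast : (u:ℝ) + t = n := by exact_mod_cast hut
      have h3 : 1 - (t:ℝ)/n = (u:ℝ)/n := by
        rw [eq_div_iff (ne_of_gt hnR)]
        field_simp
        linarith
      rw [h3, inv_div]
    rw [e1, e2, ← hLp, ← hLq] at hK0
    rw [div_add_div _ _ (ne_of_gt hLppos) (ne_of_gt hLqpos), le_div_iff₀ (mul_pos hLppos hLqpos)]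
    linarith [hK0]
  have h2kt : 2*k ≤ t := by omega
  have h2ku : 2*k ≤ u := by omega
  have hk2t : (k:ℝ)^2 ≤ 4*t := by
    have h' : k*k ≤ 4*t := by omega
    rw [pow_two]
    exact_mod_cast h'
  have hk2u : (k:ℝ)^2 ≤ 4*u := by
    have h' : k*k ≤ 4*u := by omega
    rw [pow_two]
    exact_mod_cast h'
  have hkt : k < t := by omega
  have hku : k ≤ u := by omega
  rcases le_or_gt ((k:ℝ) * Lp) (K * Real.log 2) with hC1 | hC2
  · -- a = k, b = 0
    refine ⟨k, 0, by omega, hkt, by omega, ?_, by simpa using htriv u⟩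
    apply hbound_of n t k k (by omega) htn le_rfl h2kt hk2t
    calc (k:ℝ) * Real.log ((n:ℝ)/t) = (k:ℝ) * Lp := by rw [hLp]
      _ ≤ K * Real.log 2 := hC1
      _ = ((k:ℝ)/2 + 2) * Real.log 2 := by rw [hK]
  · -- main subcase
    set a := ⌊K * Real.log 2 / Lp⌋₊ with ha
    have hnum : (0:ℝ) ≤ K * Real.log 2 / Lp :=
      le_of_lt (div_pos (mul_pos hKpos hlog2pos) hLppos)
    have hax : (a:ℝ) ≤ K * Real.log 2 / Lp := Nat.floor_le hnum
    have hfloor : K * Real.log 2 / Lp < (a:ℝ) + 1 := Nat.lt_floor_add_one _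
    clear_value a
    have haLp : (a:ℝ) * Lp ≤ K * Real.log 2 := by
      rw [← le_div_iff₀ hLppos]
      exact hax
    have hak : a < k := by
      have h' : K * Real.log 2 / Lp < (k:ℝ) := by
        rw [div_lt_iff₀ hLppos]
        linarith
      rw [ha]
      exact (Nat.floor_lt hnum).2 h'
    set b := k - a with hb
    clear_value b
    have habk : a + b = k := by omega
    have hbcast : (b:ℝ) = (k:ℝ) - a := by
      rw [hb]
      push_cast [Nat.cast_sub hak.le]
      ring
    have hbLq : (b:ℝ) * Lq ≤ K * Real.log 2 := by
      have hsum : 2 * K ≤ K * Real.log 2 / Lp + K * Real.log 2 / Lq := by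
        have h1 : K * (Real.log 2 / Lp) + K * (Real.log 2 / Lq) = K * (Real.log 2/Lp + Real.log 2/Lq) := by ring
        have := mul_le_mul_of_nonneg_left hkey (le_of_lt hKpos)
        calc 2*K = K*2 := by ring
          _ ≤ K * (Real.log 2 / Lp + Real.log 2 / Lq) := this
          _ = K * Real.log 2 / Lp + K * Real.log 2 / Lq := by ring
      have hK2 : 2*K = (k:ℝ) + 4 := by rw [hK]; ring
      have hble : (b:ℝ) ≤ K * Real.log 2 / Lq - 3 := by
        rw [hbcast]
        linarith
      rw [← le_div_iff₀ hLqpos]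
      linarith
    rw [hLp] at haLp
    rw [hLq] at hbLq
    refine ⟨a, b, habk, by omega, by omega, ?_, ?_⟩
    · exact hbound_of n t a k (by omega) htn (by omega) h2kt hk2t (by
        calc (a:ℝ) * Real.log ((n:ℝ)/t) ≤ K * Real.log 2 := haLp
          _ = ((k:ℝ)/2 + 2) * Real.log 2 := by rw [hK])
    · exact hbound_of n u b k (by omega) (by omega) (by omega) h2ku hk2u (by
        calc (b:ℝ) * Real.log ((n:ℝ)/u) ≤ K * Real.log 2 := hbLq
          _ = ((k:ℝ)/2 + 2) * Real.log 2 := by rw [hK])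

end AuxSatProof

lemma one_le_rpow_half (k : ℕ) : (1:ℝ) ≤ (2:ℝ)^((k:ℝ)/2) := by
  rw [show (1:ℝ) = (2:ℝ)^(0:ℝ) by rw [Real.rpow_zero]]
  exact Real.rpow_le_rpow_of_exponent_le one_le_two (by positivity)

theorem stmt_17 :
    ∃ C : ℝ, 0 < C ∧ ∀ (α : Type) [DecidableEq α] (X : Finset α) (k : ℕ),
      1 ≤ k → X.card = k ^ 2 + k →
      ∀ t : ℕ, 1 ≤ t → t ≤ k ^ 2 + k →
        ∃ Ft Gt : Finset (Finset α), Ft.Nonempty ∧ Gt.Nonempty ∧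
          (∀ A ∈ Ft, A ⊆ X) ∧ (∀ B ∈ Gt, B ⊆ X) ∧
          (∀ A ∈ Ft, ∀ B ∈ Gt, k ≤ A.card + B.card) ∧
          ((Ft.card + Gt.card : ℝ) ≤ C * (k : ℝ) ^ 2 * (2 : ℝ) ^ ((k : ℝ) / 2)) ∧
          ∀ S ⊆ X, S.card = t → (∃ A ∈ Ft, A ⊂ S) ∧ (∃ B ∈ Gt, B ∩ S = ∅) := by
  refine ⟨(2:ℝ)^(10000:ℕ), by positivity, ?_⟩
  intro α _ X k hk1 hX t ht1 htn
  set n := k^2 + k with hn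
  have hn1 : 1 ≤ n := by
    have : 1 ≤ k := hk1
    have hsq : 1*1 ≤ k*k := Nat.mul_le_mul this this
    simp only [hn, pow_two]
    omega
  have hCk : ((2:ℝ)^(10000:ℕ)) ≤ (2:ℝ)^(10000:ℕ) * (k:ℝ)^2 * (2:ℝ)^((k:ℝ)/2) := by
    have h1 : (1:ℝ) ≤ (k:ℝ)^2 := by
      have : (1:ℝ) ≤ (k:ℝ) := by exact_mod_cast hk1
      nlinarith
    have h2 := one_le_rpow_half k
    have h3 : (1:ℝ) ≤ (k:ℝ)^2 * (2:ℝ)^((k:ℝ)/2) := one_le_mul_of_one_le_of_one_le h1 h2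
    have hp := pow_pos (show (0:ℝ) < 2 by norm_num) 10000
    rw [mul_assoc]; exact le_mul_of_one_le_right hp.le h3
  rcases lt_or_ge k 100 with hsmall | hbig
  · -- small k : trivial construction
    have hcard_small : ((2:ℕ)^n + 1 : ℝ) ≤ (2:ℝ)^(10000:ℕ) := by
      have hb : n ≤ 9900 := by
        have h99 : k ≤ 99 := by omega
        have : k*k ≤ 99*99 := Nat.mul_le_mul h99 h99
        simp only [hn, pow_two]
        omega
      have h1 : (2:ℕ)^n + 1 ≤ 2^9901 := by
        have h2 : (2:ℕ)^n ≤ 2^9900 := Nat.pow_le_pow_right (by norm_num) hb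
        have h3 : (2:ℕ)^9901 = 2^9900 + 2^9900 := by rw [pow_succ]; ring
        have h4 : 1 ≤ (2:ℕ)^9900 := Nat.one_le_two_pow
        omega
      have h5 : (2:ℕ)^9901 ≤ 2^10000 := Nat.pow_le_pow_right (by norm_num) (by norm_num)
      have : ((2:ℕ)^n + 1 : ℕ) ≤ 2^10000 := le_trans h1 h5
      calc ((2:ℕ)^n + 1 : ℝ) = (((2:ℕ)^n + 1 : ℕ) : ℝ) := by push_cast; ring
        _ ≤ ((2^10000 : ℕ) : ℝ) := by exact_mod_cast this
        _ = (2:ℝ)^(10000:ℕ) := by push_cast; ring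
    rcases le_or_gt (t + k) n with hts | hts
    · -- t ≤ n - k : Ft = {∅}, Gt = all k-subsets
      refine ⟨{∅}, X.powersetCard k, Finset.singleton_nonempty _,
          Finset.powersetCard_nonempty.2 (by rw [hX]; omega), ?_, ?_, ?_, ?_, ?_⟩
      · intro A hA; rw [Finset.mem_singleton] at hA; subst hA; exact Finset.empty_subset X
      · intro B hB; exact (Finset.mem_powersetCard.1 hB).1
      · intro A hA B hB
        rw [Finset.mem_singleton] at hA; subst hA
        rw [(Finset.mem_powersetCard.1 hB).2]
        simp
      · have hc : (X.powersetCard k).card = n.choose k := by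
          rw [Finset.card_powersetCard, hX]
        have hpc : ((X.powersetCard k).card : ℝ) ≤ ((2:ℕ)^n : ℝ) := by
          rw [hc]; exact_mod_cast choose_le_two_pow' n k
        have hone : (({∅} : Finset (Finset α)).card : ℝ) = 1 := by
          rw [Finset.card_singleton]; norm_num
        push_cast at hpc hcard_small ⊢
        rw [Finset.card_singleton]
        push_cast
        linarith [hCk]
      · intro S hSX hScard
        constructor
        · refine ⟨∅, Finset.mem_singleton_self _, ?_⟩
          rw [Finset.empty_ssubset]
          rw [← Finset.card_pos, hScard]; omega
        · have hcs : k ≤ (X \ S).card := by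
            rw [Finset.card_sdiff_of_subset hSX, hX, hScard]; omega
          obtain ⟨B, hBsub, hBcard⟩ := Finset.exists_subset_card_eq hcs
          have hBX : B ⊆ X ∧ Disjoint B S := Finset.subset_sdiff.1 hBsub
          refine ⟨B, Finset.mem_powersetCard.2 ⟨hBX.1, hBcard⟩, ?_⟩
          exact Finset.disjoint_iff_inter_eq_empty.1 hBX.2
    · -- t > n - k : Ft = all k-subsets, Gt = {∅}
      have hksq : k ≤ k^2 := by
        calc k = k*1 := (Nat.mul_one k).symm
          _ ≤ k*k := Nat.mul_le_mul_left k hk1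
          _ = k^2 := (pow_two k).symm
      have hkt : k < t := by omega
      refine ⟨X.powersetCard k, {∅}, Finset.powersetCard_nonempty.2 (by rw [hX]; omega),
          Finset.singleton_nonempty _, ?_, ?_, ?_, ?_, ?_⟩
      · intro A hA; exact (Finset.mem_powersetCard.1 hA).1
      · intro B hB; rw [Finset.mem_singleton] at hB; subst hB; exact Finset.empty_subset X
      · intro A hA B hB
        rw [(Finset.mem_powersetCard.1 hA).2]
        simp
      · have hc : (X.powersetCard k).card = n.choose k := by
          rw [Finset.card_powersetCard, hX]
        have hpc : ((X.powersetCard k).card : ℝ) ≤ ((2:ℕ)^n : ℝ) := by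
          rw [hc]; exact_mod_cast choose_le_two_pow' n k
        push_cast at hpc hcard_small ⊢
        rw [Finset.card_singleton]
        push_cast
        linarith [hCk]
      · intro S hSX hScard
        constructor
        · have hkS : k ≤ S.card := by rw [hScard]; omega
          obtain ⟨A, hAsub, hAcard⟩ := Finset.exists_subset_card_eq hkS
          refine ⟨A, Finset.mem_powersetCard.2 ⟨hAsub.trans hSX, hAcard⟩, ?_⟩
          apply Finset.ssubset_iff_subset_ne.2 ⟨hAsub, ?_⟩
          intro h
          rw [h, hScard] at hAcard
          omega
        · exact ⟨∅, Finset.mem_singleton_self _, Finset.empty_inter S⟩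
  · -- large k
    obtain ⟨a, b, hab, hat, hbu, hFb, hGb⟩ := choose_ab k t n hbig hn ht1 htn
    have hXn : X.card = n := hX
    obtain ⟨Ft, hFne, hFmem, hFcard, hFcov⟩ :=
      side_family X a t (Rbound k) (one_le_Rbound k) hat.le (by rw [hXn]; omega)
        (by rw [hXn]; omega) (by rw [hXn]; exact hFb)
    obtain ⟨Gt, hGne, hGmem, hGcard, hGcov⟩ :=
      side_family X b (n - t) (Rbound k) (one_le_Rbound k) hbu (by rw [hXn]; omega)
        (by rw [hXn]; omega) (by rw [hXn]; exact hGb)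
    refine ⟨Ft, Gt, hFne, hGne, fun A hA => (hFmem A hA).1, fun B hB => (hGmem B hB).1,
        ?_, ?_, ?_⟩
    · intro A hA B hB
      rw [(hFmem A hA).2, (hGmem B hB).2, hab]
    · -- cardinality bound
      have hexp4 : Real.exp 4 ≤ 64 := by
        have h1 : Real.exp 4 = (Real.exp 1)^(4:ℕ) := by
          rw [← Real.exp_nat_mul]; norm_num
        have h2 : (Real.exp 1)^(4:ℕ) ≤ (2.7182818286:ℝ)^(4:ℕ) := by
          apply pow_le_pow_left₀ (le_of_lt (Real.exp_pos 1)) (le_of_lt Real.exp_one_lt_d9)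
        rw [h1]
        calc (Real.exp 1)^(4:ℕ) ≤ (2.7182818286:ℝ)^(4:ℕ) := h2
          _ ≤ 64 := by norm_num
      have hsplit : (2:ℝ)^((k:ℝ)/2+2) = (2:ℝ)^((k:ℝ)/2) * 4 := by
        rw [Real.rpow_add (by norm_num)]
        congr 1
        rw [show ((2:ℝ):ℝ) = ((2:ℕ):ℝ) by norm_num, Real.rpow_natCast]
        norm_num
      have hhalfpos : (0:ℝ) < (2:ℝ)^((k:ℝ)/2) := Real.rpow_pos_of_pos (by norm_num) _
      have hRb : Rbound k ≤ 256 * (2:ℝ)^((k:ℝ)/2) := by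
        rw [Rbound, hsplit]
        nlinarith [hhalfpos, hexp4, Real.exp_pos (4:ℝ)]
      have hn2k : (n:ℝ) ≤ 2*(k:ℝ)^2 := by
        have hksq : k ≤ k^2 := by
          calc k = k*1 := (Nat.mul_one k).symm
            _ ≤ k*k := Nat.mul_le_mul_left k hk1
            _ = k^2 := (pow_two k).symm
        have : n ≤ 2*k^2 := by omega
        exact_mod_cast this
      have hR1 : Rbound k + 1 ≤ 2 * Rbound k := by linarith [one_le_Rbound k]
      have hXcast : ((X.card : ℕ) : ℝ) = (n:ℝ) := by exact_mod_cast hXn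
      rw [hXcast] at hFcard hGcard
      have htot : ((Ft.card : ℝ) + Gt.card) ≤ 4 * (n:ℝ) * Rbound k := by
        have hnpos : (0:ℝ) ≤ (n:ℝ) := Nat.cast_nonneg n
        have h1 : (n:ℝ) * (Rbound k + 1) ≤ (n:ℝ) * (2 * Rbound k) :=
          mul_le_mul_of_nonneg_left hR1 hnpos
        linarith [hFcard, hGcard]
      have hk2pos : (0:ℝ) ≤ (k:ℝ)^2 := by positivity
      calc ((Ft.card : ℝ) + Gt.card) ≤ 4 * (n:ℝ) * Rbound k := htot
        _ ≤ 4 * (2*(k:ℝ)^2) * (256 * (2:ℝ)^((k:ℝ)/2)) := by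
            have hRpos : (0:ℝ) ≤ Rbound k := le_trans zero_le_one (one_le_Rbound k)
            apply mul_le_mul (by nlinarith) hRb hRpos (by positivity)
        _ = 2048 * (k:ℝ)^2 * (2:ℝ)^((k:ℝ)/2) := by ring
        _ ≤ (2:ℝ)^(10000:ℕ) * (k:ℝ)^2 * (2:ℝ)^((k:ℝ)/2) := by
            have : (2048:ℝ) ≤ (2:ℝ)^(10000:ℕ) := by
              calc (2048:ℝ) = 2^(11:ℕ) := by norm_num
                _ ≤ 2^(10000:ℕ) := by
                  apply pow_le_pow_right₀ (by norm_num) (by norm_num)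
            exact mul_le_mul_of_nonneg_right (mul_le_mul_of_nonneg_right this hk2pos) hhalfpos.le
    · -- covering
      intro S hSX hScard
      constructor
      · obtain ⟨A, hAF, hAS⟩ := hFcov S hSX hScard
        refine ⟨A, hAF, ?_⟩
        apply Finset.ssubset_iff_subset_ne.2 ⟨hAS, ?_⟩
        intro h
        have := (hFmem A hAF).2
        rw [h, hScard] at this
        omega
      · have hXS : (X \ S).card = n - t := by
          rw [Finset.card_sdiff_of_subset hSX, hXn, hScard]
        obtain ⟨B, hBG, hBS⟩ := hGcov (X \ S) Finset.sdiff_subset hXS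
        refine ⟨B, hBG, ?_⟩
        have h2 := Finset.subset_sdiff.1 hBS
        exact Finset.disjoint_iff_inter_eq_empty.1 h2.2
end
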